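/- arXiv:2309.10143 — 6 statements merged into one kernel-verified Lean document; each statement's English description precedes it below -/
import Mathlib

section
/- Let X be a set, Ω a domain on X, and K_Ω : Ω → ℝ any function. Then the set 𝒞(K_Ω) of completions of K_Ω, regarded as a subset of the space of all functions X × X → ℝ, is convex, and it is compact in the topology of pointwise convergence (the product topology on X × X → ℝ). -/
/-- A reproducing kernel on a set `X`. -/
def IsKernel {X : Type*} (K : X → X → ℝ) : Prop :=
  (∀ x y, K x y = K y x) ∧
  ∀ (n : ℕ) (α : Fin n → ℝ) (x : Fin n → X),
    0 ≤ ∑ i, ∑ j, α i * α j * K (x i) (x j)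

/-- A domain on `X`: a symmetric subset of `X × X` containing the diagonal. -/
def IsCompletionDomain {X : Type*} (Ω : Set (X × X)) : Prop :=
  (∀ x y, (x, y) ∈ Ω ↔ (y, x) ∈ Ω) ∧ ∀ x, (x, x) ∈ Ω

/-- The set of completions of `KΩ`, as a subset of the space of functions `X × X → ℝ`. -/
def completionSet {X : Type*} (Ω : Set (X × X)) (KΩ : X → X → ℝ) :
    Set (X × X → ℝ) :=
  {K | IsKernel (fun x y => K (x, y)) ∧ ∀ p ∈ Ω, K p = KΩ p.1 p.2}

lemma completion_bound {X : Type*} {Ω : Set (X × X)} (hΩ : IsCompletionDomain Ω)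
    {KΩ : X → X → ℝ} {K : X × X → ℝ} (hK : K ∈ completionSet Ω KΩ) (p : X × X) :
    K p ∈ Set.Icc (-((KΩ p.1 p.1 + KΩ p.2 p.2) / 2)) ((KΩ p.1 p.1 + KΩ p.2 p.2) / 2) := by
  obtain ⟨⟨hsym, hpos⟩, hres⟩ := hK
  have h1 : K (p.1, p.1) = KΩ p.1 p.1 := hres _ (hΩ.2 p.1)
  have h2 : K (p.2, p.2) = KΩ p.2 p.2 := hres _ (hΩ.2 p.2)
  have hs : K (p.2, p.1) = K (p.1, p.2) := hsym p.2 p.1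
  have hA := hpos 2 ![1, -1] ![p.1, p.2]
  have hB := hpos 2 ![1, 1] ![p.1, p.2]
  simp [Fin.sum_univ_two, h1, h2, hs] at hA hB
  have hp : K p = K (p.1, p.2) := by rw [Prod.mk.eta]
  constructor <;> rw [hp] <;> linarith

/-- The set of completions is convex and compact in the topology of pointwise convergence. -/
theorem completionSet_convex_and_isCompact {X : Type*} (Ω : Set (X × X))
    (hΩ : IsCompletionDomain Ω) (KΩ : X → X → ℝ) :
    Convex ℝ (completionSet Ω KΩ) ∧ IsCompact (completionSet Ω KΩ) := by
  constructor
  · intro K hK K' hK' a b ha hb hab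
    refine ⟨⟨fun x y => ?_, fun n α x => ?_⟩, fun p hp => ?_⟩
    · have e1 : K (x, y) = K (y, x) := hK.1.1 x y
      have e2 : K' (x, y) = K' (y, x) := hK'.1.1 x y
      simp only [Pi.add_apply, Pi.smul_apply, smul_eq_mul]
      rw [e1, e2]
    · have h1 := hK.1.2 n α x
      have h2 := hK'.1.2 n α x
      simp only [Pi.add_apply, Pi.smul_apply, smul_eq_mul]
      have : ∑ i, ∑ j, α i * α j * (a * K (x i, x j) + b * K' (x i, x j))
          = a * (∑ i, ∑ j, α i * α j * K (x i, x j))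
            + b * (∑ i, ∑ j, α i * α j * K' (x i, x j)) := by
        rw [Finset.mul_sum, Finset.mul_sum, ← Finset.sum_add_distrib]
        refine Finset.sum_congr rfl fun i _ => ?_
        rw [Finset.mul_sum, Finset.mul_sum, ← Finset.sum_add_distrib]
        refine Finset.sum_congr rfl fun j _ => ?_
        ring
      rw [this]
      positivity
    · simp only [Pi.add_apply, Pi.smul_apply, smul_eq_mul]
      rw [hK.2 p hp, hK'.2 p hp, ← add_mul, hab, one_mul]
  · have hclosed : IsClosed (completionSet Ω KΩ) := by
      have : completionSet Ω KΩ =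
          (⋂ x, ⋂ y, {K : X × X → ℝ | K (x, y) = K (y, x)}) ∩
          ((⋂ n, ⋂ α : Fin n → ℝ, ⋂ x : Fin n → X,
            {K : X × X → ℝ | 0 ≤ ∑ i, ∑ j, α i * α j * K (x i, x j)}) ∩
          (⋂ p ∈ Ω, {K : X × X → ℝ | K p = KΩ p.1 p.2})) := by
        ext K
        simp only [completionSet, IsKernel, Set.mem_setOf_eq, Set.mem_inter_iff,
          Set.mem_iInter]
        tauto
      rw [this]
      refine IsClosed.inter ?_ (IsClosed.inter ?_ ?_)
      · exact isClosed_iInter fun x => isClosed_iInter fun y =>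
          isClosed_eq (continuous_apply _) (continuous_apply _)
      · refine isClosed_iInter fun n => isClosed_iInter fun α => isClosed_iInter fun x => ?_
        exact isClosed_le continuous_const (by
          exact continuous_finset_sum _ fun i _ => continuous_finset_sum _ fun j _ =>
            (continuous_const.mul (continuous_apply _)))
      · exact isClosed_biInter fun p hp => isClosed_eq (continuous_apply _) continuous_const
    have hcpt : IsCompact {K : X × X → ℝ | ∀ p, K p ∈
        Set.Icc (-((KΩ p.1 p.1 + KΩ p.2 p.2) / 2)) ((KΩ p.1 p.1 + KΩ p.2 p.2) / 2)} :=
      isCompact_pi_infinite fun p => isCompact_Icc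
    exact IsCompact.of_isClosed_subset hcpt hclosed fun K hK p => completion_bound hΩ hK p
end

section
/- Let K be a reproducing kernel on a set X and (H, φ) a realization of K. Then for a function G : X × X → ℝ, both K + G and K − G are reproducing kernels on X if and only if there exists a self-adjoint continuous linear operator Ψ : H → H with operator norm ‖Ψ‖ ≤ 1 such that G(x,y) = ⟪Ψ(φ x), φ y⟫ for all x,y ∈ X; moreover such Ψ is unique, so this assignment is a bijective correspondence between such functions G and self-adjoint contractions on H. -/
open scoped RealInnerProductSpace

private theorem sum_finset_fin' {X : Type*} (s : Finset X) (f : X → ℝ) :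
    ∑ i : Fin s.card, f (s.equivFin.symm i : X) = ∑ x ∈ s, f x := by
  rw [← Finset.sum_coe_sort s f]
  exact Equiv.sum_comp s.equivFin.symm (fun a => f (a : X))

/-- double-sum positivity from IsKernel, over a finsupp's support -/
private theorem quad_nonneg' {X : Type*} {F : X → X → ℝ}
    (hF : ∀ (n : ℕ) (α : Fin n → ℝ) (x : Fin n → X),
      0 ≤ ∑ i, ∑ j, α i * α j * F (x i) (x j)) (α : X →₀ ℝ) :
    0 ≤ ∑ x ∈ α.support, ∑ y ∈ α.support, α x * α y * F x y := by
  have h := hF α.support.card (fun i => α (α.support.equivFin.symm i : X))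
    (fun i => (α.support.equivFin.symm i : X))
  calc (0:ℝ) ≤ _ := h
    _ = ∑ x ∈ α.support, ∑ y ∈ α.support, α x * α y * F x y := by
        rw [← sum_finset_fin' α.support (fun x => ∑ y ∈ α.support, α x * α y * F x y)]
        exact Finset.sum_congr rfl fun i _ =>
          sum_finset_fin' α.support (fun y => α _ * α y * F _ y)

/-- the bilinear form associated to `G` on finitely supported functions -/
private noncomputable def Bform {X : Type*} (G : X → X → ℝ) :
    (X →₀ ℝ) →ₗ[ℝ] (X →₀ ℝ) →ₗ[ℝ] ℝ :=
  Finsupp.linearCombination ℝ (fun x => Finsupp.linearCombination ℝ (G x))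

private theorem Bform_apply {X : Type*} (G : X → X → ℝ) (α β : X →₀ ℝ) :
    Bform G α β = ∑ x ∈ α.support, ∑ y ∈ β.support, α x * β y * G x y := by
  simp only [Bform, Finsupp.linearCombination_apply, Finsupp.sum, LinearMap.coe_sum,
    Finset.sum_apply, LinearMap.smul_apply, smul_eq_mul, Finset.mul_sum]
  exact Finset.sum_congr rfl fun x _ => Finset.sum_congr rfl fun y _ => by ring

private theorem inner_P {X H : Type*} [NormedAddCommGroup H] [InnerProductSpace ℝ H]
    {K : X → X → ℝ} (φ : X → H) (hφ : ∀ s t, ⟪φ s, φ t⟫ = K s t) (α β : X →₀ ℝ) :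
    ⟪Finsupp.linearCombination ℝ φ α, Finsupp.linearCombination ℝ φ β⟫ =
      ∑ x ∈ α.support, ∑ y ∈ β.support, α x * β y * K x y := by
  rw [Finsupp.linearCombination_apply, Finsupp.linearCombination_apply, Finsupp.sum, Finsupp.sum,
    sum_inner]
  refine Finset.sum_congr rfl fun x _ => ?_
  rw [inner_sum]
  refine Finset.sum_congr rfl fun y _ => ?_
  rw [real_inner_smul_left, real_inner_smul_right, hφ]
  ring

/-- descend a linear map on finsupps, bounded by the norm of the linear combination,
to a continuous linear map on the Hilbert space -/
private theorem descend_extend {X E F : Type*} [NormedAddCommGroup E] [NormedSpace ℝ E]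
    [NormedAddCommGroup F] [NormedSpace ℝ F] [CompleteSpace F]
    (φ : X → E) (hdense : Dense (Submodule.span ℝ (Set.range φ) : Set E))
    (T : (X →₀ ℝ) →ₗ[ℝ] F) (C : ℝ) (hC : 0 ≤ C)
    (hT : ∀ α, ‖T α‖ ≤ C * ‖Finsupp.linearCombination ℝ φ α‖) :
    ∃ Ψ : E →L[ℝ] F, ‖Ψ‖ ≤ C ∧ ∀ α, Ψ (Finsupp.linearCombination ℝ φ α) = T α := by
  set P := Finsupp.linearCombination ℝ φ with hP
  set S := Submodule.span ℝ (Set.range φ) with hS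
  have hrange : LinearMap.range P = S := Finsupp.range_linearCombination (R := ℝ) (v := φ)
  have hex : ∀ s : S, ∃ α, P α = (s : E) := fun s =>
    LinearMap.mem_range.mp (by rw [hrange]; exact s.2)
  choose rep hrep using hex
  have key : ∀ α α' : X →₀ ℝ, P α = P α' → T α = T α' := by
    intro α α' h
    have h0 : ‖T α - T α'‖ ≤ 0 := by
      calc ‖T α - T α'‖ = ‖T (α - α')‖ := by rw [map_sub]
        _ ≤ C * ‖P (α - α')‖ := hT _
        _ = 0 := by rw [map_sub, h, sub_self, norm_zero, mul_zero]
    exact sub_eq_zero.mp (norm_le_zero_iff.mp h0)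
  let g0 : S →ₗ[ℝ] F :=
    { toFun := fun s => T (rep s)
      map_add' := by
        intro s t
        have h1 : P (rep (s + t)) = P (rep s + rep t) := by
          simp [map_add, hrep]
        show T (rep (s+t)) = T (rep s) + T (rep t)
        rw [key _ _ h1, map_add]
      map_smul' := by
        intro c s
        have h1 : P (rep (c • s)) = P (c • rep s) := by
          simp [map_smul, hrep]
        show T (rep (c • s)) = c • T (rep s)
        rw [key _ _ h1, map_smul] }
  have hg0 : ∀ s : S, ‖g0 s‖ ≤ C * ‖s‖ := by
    intro s
    calc ‖T (rep s)‖ ≤ C * ‖P (rep s)‖ := hT _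
      _ = C * ‖s‖ := by rw [hrep]; rfl
  let g := g0.mkContinuous C hg0
  let e : S →L[ℝ] E := S.subtypeL
  have h_dense : DenseRange e := hdense.denseRange_val
  have hbound : ∀ x : S, ‖x‖ ≤ ((1 : NNReal) : ℝ) * ‖e x‖ := by
    intro x
    simp [e]
  refine ⟨g.extend e, ?_, ?_⟩
  · calc ‖_‖ ≤ ((1 : NNReal) : ℝ) * ‖g‖ :=
          ContinuousLinearMap.opNorm_extend_le g h_dense hbound
      _ ≤ C := by
          rw [NNReal.coe_one, one_mul]
          exact g0.mkContinuous_norm_le hC hg0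
  · intro α
    have hmem : P α ∈ S := by rw [← hrange]; exact ⟨α, rfl⟩
    have heα : P α = e ⟨P α, hmem⟩ := rfl
    rw [heα, ContinuousLinearMap.extend_eq g h_dense
      (ContinuousLinearMap.isUniformEmbedding_of_bound e hbound).isUniformInducing]
    exact key _ _ (by rw [hrep])


private theorem abs_Bform_le {X E : Type*} [NormedAddCommGroup E] [InnerProductSpace ℝ E]
    (G : X → X → ℝ) (hGsym : ∀ x y, G x y = G y x) (φ : X → E)
    (hQ : ∀ γ : X →₀ ℝ, |Bform G γ γ| ≤ ‖Finsupp.linearCombination ℝ φ γ‖ ^ 2)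
    (α β : X →₀ ℝ) :
    |Bform G α β| ≤ ‖Finsupp.linearCombination ℝ φ α‖ * ‖Finsupp.linearCombination ℝ φ β‖ := by
  set P := Finsupp.linearCombination ℝ φ with hP
  have hBsym : ∀ u v : X →₀ ℝ, Bform G u v = Bform G v u := by
    intro u v
    rw [Bform_apply, Bform_apply, Finset.sum_comm]
    exact Finset.sum_congr rfl fun x _ => Finset.sum_congr rfl fun y _ => by
      rw [hGsym x y]; ring
  -- the parallelogram estimate
  have step : ∀ t : ℝ, 0 < t →
      |Bform G α β| ≤ (t ^ 2 * ‖P α‖ ^ 2 + (t⁻¹) ^ 2 * ‖P β‖ ^ 2) / 2 := by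
    intro t ht
    set u := t • α with hu
    set v := t⁻¹ • β with hv
    have ht' : t ≠ 0 := ne_of_gt ht
    have hexp : ∀ w w' : X →₀ ℝ, Bform G (w + w') (w + w') =
        Bform G w w + 2 * Bform G w w' + Bform G w' w' := by
      intro w w'
      simp only [map_add, LinearMap.add_apply]
      rw [hBsym w' w]; ring
    have hexp' : ∀ w w' : X →₀ ℝ, Bform G (w - w') (w - w') =
        Bform G w w - 2 * Bform G w w' + Bform G w' w' := by
      intro w w'
      simp only [map_sub, LinearMap.sub_apply]
      rw [hBsym w' w]; ring
    have huv : Bform G u v = Bform G α β := by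
      simp only [hu, hv, map_smul, LinearMap.smul_apply, smul_eq_mul]
      rw [← mul_assoc, inv_mul_cancel₀ ht', one_mul]
    have key : Bform G α β =
        (Bform G (u + v) (u + v) - Bform G (u - v) (u - v)) / 4 := by
      rw [hexp, hexp', huv]; ring
    have hPu : ‖P u‖ ^ 2 = t ^ 2 * ‖P α‖ ^ 2 := by
      rw [hu, map_smul, norm_smul, Real.norm_eq_abs, mul_pow, sq_abs]
    have hPv : ‖P v‖ ^ 2 = (t⁻¹) ^ 2 * ‖P β‖ ^ 2 := by
      rw [hv, map_smul, norm_smul, Real.norm_eq_abs, mul_pow, sq_abs]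
    have hpar : ‖P (u + v)‖ ^ 2 + ‖P (u - v)‖ ^ 2 = 2 * (‖P u‖ ^ 2 + ‖P v‖ ^ 2) := by
      rw [map_add, map_sub, pow_two, pow_two, pow_two, pow_two]
      linarith [parallelogram_law_with_norm ℝ (P u) (P v)]
    have h1 := hQ (u + v)
    have h2 := hQ (u - v)
    rw [key]
    rw [abs_div]
    have h4 : |Bform G (u + v) (u + v) - Bform G (u - v) (u - v)| ≤
        ‖P (u + v)‖ ^ 2 + ‖P (u - v)‖ ^ 2 := by
      calc |Bform G (u + v) (u + v) - Bform G (u - v) (u - v)|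
          ≤ |Bform G (u + v) (u + v)| + |Bform G (u - v) (u - v)| := abs_sub _ _
        _ ≤ ‖P (u + v)‖ ^ 2 + ‖P (u - v)‖ ^ 2 := add_le_add h1 h2
    rw [abs_of_pos (by norm_num : (0:ℝ) < 4)] at *
    rw [hPu] at hpar
    rw [hPv] at hpar
    linarith
  -- pass to the limit
  have hδ : ∀ δ : ℝ, 0 < δ → |Bform G α β| ≤ (‖P α‖ + δ) * (‖P β‖ + δ) := by
    intro δ hδ0
    have ha : 0 < ‖P α‖ + δ := by linarith [norm_nonneg (P α)]
    have hb : 0 < ‖P β‖ + δ := by linarith [norm_nonneg (P β)]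
    set t := Real.sqrt ((‖P β‖ + δ) / (‖P α‖ + δ)) with htdef
    have ht : 0 < t := Real.sqrt_pos.mpr (div_pos hb ha)
    have ht2 : t ^ 2 = (‖P β‖ + δ) / (‖P α‖ + δ) := by
      rw [htdef, sq, Real.mul_self_sqrt (le_of_lt (div_pos hb ha))]
    have hti2 : (t⁻¹) ^ 2 = (‖P α‖ + δ) / (‖P β‖ + δ) := by
      rw [inv_pow, ht2, inv_div]
    calc |Bform G α β| ≤ (t ^ 2 * ‖P α‖ ^ 2 + (t⁻¹) ^ 2 * ‖P β‖ ^ 2) / 2 := step t ht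
      _ ≤ (t ^ 2 * (‖P α‖ + δ) ^ 2 + (t⁻¹) ^ 2 * (‖P β‖ + δ) ^ 2) / 2 := by
          have h1 : ‖P α‖ ^ 2 ≤ (‖P α‖ + δ) ^ 2 :=
            pow_le_pow_left₀ (norm_nonneg _) (by linarith) 2
          have h2 : ‖P β‖ ^ 2 ≤ (‖P β‖ + δ) ^ 2 :=
            pow_le_pow_left₀ (norm_nonneg _) (by linarith) 2
          have m1 := mul_le_mul_of_nonneg_left h1 (sq_nonneg t)
          have m2 := mul_le_mul_of_nonneg_left h2 (sq_nonneg t⁻¹)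
          linarith
      _ = (‖P α‖ + δ) * (‖P β‖ + δ) := by
          rw [ht2, hti2]
          field_simp [ha.ne', hb.ne']
          ring
  have hev : ∀ᶠ δ in nhdsWithin (0:ℝ) (Set.Ioi 0),
      |Bform G α β| ≤ (‖P α‖ + δ) * (‖P β‖ + δ) :=
    Filter.eventually_of_mem self_mem_nhdsWithin fun δ h => hδ δ h
  have htend : Filter.Tendsto (fun δ : ℝ => (‖P α‖ + δ) * (‖P β‖ + δ))
      (nhdsWithin (0:ℝ) (Set.Ioi 0)) (nhds (‖P α‖ * ‖P β‖)) := by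
    have h0 : Filter.Tendsto (fun δ : ℝ => (‖P α‖ + δ) * (‖P β‖ + δ)) (nhds 0)
        (nhds ((‖P α‖ + 0) * (‖P β‖ + 0))) :=
      ((continuous_const.add continuous_id).mul (continuous_const.add continuous_id)).tendsto 0
    simpa using h0.mono_left nhdsWithin_le_nhds
  exact ge_of_tendsto htend hev

/-- For a reproducing kernel `K` with realization `(H, φ)`, a function `G` is such that
both `K + G` and `K - G` are reproducing kernels iff `G(x,y) = ⟪Ψ (φ x), φ y⟫` for a unique
self-adjoint contraction `Ψ` on `H`. -/
theorem pm_selfAdjoint_contraction_correspondence {X H : Type*}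
    [NormedAddCommGroup H] [InnerProductSpace ℝ H] [CompleteSpace H]
    (K : X → X → ℝ) (hK : IsKernel K) (φ : X → H)
    (hφ : ∀ s t, ⟪φ s, φ t⟫ = K s t)
    (hdense : Dense (Submodule.span ℝ (Set.range φ) : Set H))
    (G : X → X → ℝ) :
    (IsKernel (fun x y => K x y + G x y) ∧ IsKernel (fun x y => K x y - G x y)) ↔
      (∃! Ψ : H →L[ℝ] H,
        (∀ f g : H, ⟪Ψ f, g⟫ = ⟪f, Ψ g⟫) ∧ ‖Ψ‖ ≤ 1 ∧
          ∀ x y, G x y = ⟪Ψ (φ x), φ y⟫) := by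
  constructor
  · rintro ⟨hplus, hminus⟩
    set P := Finsupp.linearCombination ℝ φ with hPdef
    have hsingle : ∀ x, P (Finsupp.single x 1) = φ x := by
      intro x; simp [hPdef]
    have hGsym : ∀ x y, G x y = G y x := by
      intro x y
      have h1 : K x y + G x y = K y x + G y x := hplus.1 x y
      have h2 := hK.1 x y
      linarith
    have hQ : ∀ γ : X →₀ ℝ, |Bform G γ γ| ≤ ‖P γ‖ ^ 2 := by
      intro γ
      have h1 : (0:ℝ) ≤ ∑ x ∈ γ.support, ∑ y ∈ γ.support, γ x * γ y * (K x y + G x y) :=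
        quad_nonneg' hplus.2 γ
      have h2 : (0:ℝ) ≤ ∑ x ∈ γ.support, ∑ y ∈ γ.support, γ x * γ y * (K x y - G x y) :=
        quad_nonneg' hminus.2 γ
      have e1 : ∑ x ∈ γ.support, ∑ y ∈ γ.support, γ x * γ y * (K x y + G x y)
          = ⟪P γ, P γ⟫ + Bform G γ γ := by
        rw [inner_P φ hφ, Bform_apply, ← Finset.sum_add_distrib]
        exact Finset.sum_congr rfl fun x _ => by
          rw [← Finset.sum_add_distrib]
          exact Finset.sum_congr rfl fun y _ => by ring
      have e2 : ∑ x ∈ γ.support, ∑ y ∈ γ.support, γ x * γ y * (K x y - G x y)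
          = ⟪P γ, P γ⟫ - Bform G γ γ := by
        rw [inner_P φ hφ, Bform_apply, ← Finset.sum_sub_distrib]
        exact Finset.sum_congr rfl fun x _ => by
          rw [← Finset.sum_sub_distrib]
          exact Finset.sum_congr rfl fun y _ => by ring
      have hn : ⟪P γ, P γ⟫ = ‖P γ‖ ^ 2 := real_inner_self_eq_norm_sq _
      rw [e1, hn] at h1
      rw [e2, hn] at h2
      rw [abs_le]
      constructor <;> linarith
    have hBd := abs_Bform_le G hGsym φ hQ
    have hstepA : ∀ α : X →₀ ℝ, ∃ ℓ : H →L[ℝ] ℝ, ‖ℓ‖ ≤ ‖P α‖ ∧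
        ∀ β, ℓ (P β) = Bform G α β := by
      intro α
      obtain ⟨ℓ, h1, h2⟩ := descend_extend φ hdense (Bform G α) ‖P α‖ (norm_nonneg _)
        (fun β => by rw [Real.norm_eq_abs]; exact hBd α β)
      exact ⟨ℓ, h1, h2⟩
    choose ℓ hℓnorm hℓeq using hstepA
    have hℓadd : ∀ α α', ℓ (α + α') = ℓ α + ℓ α' := by
      intro α α'
      refine ContinuousLinearMap.ext_on hdense ?_
      rintro _ ⟨x, rfl⟩
      rw [ContinuousLinearMap.add_apply, ← hsingle x, hℓeq, hℓeq, hℓeq, map_add,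
        LinearMap.add_apply]
    have hℓsmul : ∀ (c : ℝ) α, ℓ (c • α) = c • ℓ α := by
      intro c α
      refine ContinuousLinearMap.ext_on hdense ?_
      rintro _ ⟨x, rfl⟩
      rw [ContinuousLinearMap.smul_apply, ← hsingle x, hℓeq, hℓeq, map_smul,
        LinearMap.smul_apply]
    let Ψ0 : (X →₀ ℝ) →ₗ[ℝ] H :=
      { toFun := fun α => (InnerProductSpace.toDual ℝ H).symm (ℓ α)
        map_add' := fun α α' => by simp only [hℓadd, map_add]
        map_smul' := fun c α => by simp only [hℓsmul, map_smul, RingHom.id_apply] }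
    have hΨ0norm : ∀ α, ‖Ψ0 α‖ ≤ 1 * ‖P α‖ := by
      intro α
      rw [one_mul]
      calc ‖(InnerProductSpace.toDual ℝ H).symm (ℓ α)‖ = ‖ℓ α‖ :=
            LinearIsometryEquiv.norm_map _ _
        _ ≤ ‖P α‖ := hℓnorm α
    obtain ⟨Ψ, hΨnorm, hΨeq⟩ := descend_extend φ hdense Ψ0 1 one_pos.le hΨ0norm
    have hip : ∀ α β, ⟪Ψ (P α), P β⟫ = Bform G α β := by
      intro α β
      rw [hΨeq]
      calc ⟪(InnerProductSpace.toDual ℝ H).symm (ℓ α), P β⟫ = ℓ α (P β) :=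
            InnerProductSpace.toDual_symm_apply
        _ = Bform G α β := hℓeq α β
    have hB1 : ∀ x y, Bform G (Finsupp.single x 1) (Finsupp.single y 1) = G x y := by
      intro x y
      rw [Bform_apply, Finsupp.support_single_ne_zero _ one_ne_zero,
        Finsupp.support_single_ne_zero _ one_ne_zero]
      simp
    have hGip : ∀ x y, G x y = ⟪Ψ (φ x), φ y⟫ := by
      intro x y
      have h := hip (Finsupp.single x 1) (Finsupp.single y 1)
      rw [hsingle, hsingle, hB1] at h
      exact h.symm
    have hsa1 : ∀ y (f : H), ⟪φ y, Ψ f⟫ = ⟪Ψ (φ y), f⟫ := by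
      intro y
      have h : (innerSL ℝ (φ y)).comp Ψ = innerSL ℝ (Ψ (φ y)) := by
        refine ContinuousLinearMap.ext_on hdense ?_
        rintro _ ⟨x, rfl⟩
        show ⟪φ y, Ψ (φ x)⟫ = ⟪Ψ (φ y), φ x⟫
        calc ⟪φ y, Ψ (φ x)⟫ = ⟪Ψ (φ x), φ y⟫ := real_inner_comm _ _
          _ = G x y := (hGip x y).symm
          _ = G y x := hGsym x y
          _ = ⟪Ψ (φ y), φ x⟫ := hGip y x
      intro f
      exact DFunLike.congr_fun h f
    have hsa : ∀ f g : H, ⟪Ψ f, g⟫ = ⟪f, Ψ g⟫ := by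
      intro f
      have h : innerSL ℝ (Ψ f) = (innerSL ℝ f).comp Ψ := by
        refine ContinuousLinearMap.ext_on hdense ?_
        rintro _ ⟨y, rfl⟩
        show ⟪Ψ f, φ y⟫ = ⟪f, Ψ (φ y)⟫
        calc ⟪Ψ f, φ y⟫ = ⟪φ y, Ψ f⟫ := real_inner_comm _ _
          _ = ⟪Ψ (φ y), f⟫ := hsa1 y f
          _ = ⟪f, Ψ (φ y)⟫ := real_inner_comm _ _
      intro g
      exact DFunLike.congr_fun h g
    refine ⟨Ψ, ⟨hsa, hΨnorm, hGip⟩, ?_⟩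
    rintro Ψ' ⟨hsa', hnorm', hG'⟩
    refine ContinuousLinearMap.ext_on hdense ?_
    rintro _ ⟨x, rfl⟩
    have hw : ∀ y, ⟪Ψ' (φ x) - Ψ (φ x), φ y⟫ = 0 := by
      intro y
      rw [inner_sub_left, ← hG' x y, ← hGip x y, sub_self]
    have h0 : innerSL ℝ (Ψ' (φ x) - Ψ (φ x)) = 0 := by
      refine ContinuousLinearMap.ext_on hdense ?_
      rintro _ ⟨y, rfl⟩
      show ⟪Ψ' (φ x) - Ψ (φ x), φ y⟫ = (0 : H →L[ℝ] ℝ) (φ y)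
      rw [ContinuousLinearMap.zero_apply]
      exact hw y
    have h1 := DFunLike.congr_fun h0 (Ψ' (φ x) - Ψ (φ x))
    simp only [innerSL_apply_apply, ContinuousLinearMap.zero_apply] at h1
    exact sub_eq_zero.mp (inner_self_eq_zero.mp h1)
  · rintro ⟨Ψ, ⟨hsa, hnorm, hG⟩, -⟩
    have hGsym : ∀ x y, G x y = G y x := by
      intro x y
      rw [hG x y, hG y x, hsa (φ y) (φ x)]
      exact real_inner_comm _ _
    have main : ∀ (n : ℕ) (a : Fin n → ℝ) (x : Fin n → X),
        (∑ i, ∑ j, a i * a j * K (x i) (x j)) = ‖∑ i, a i • φ (x i)‖ ^ 2 ∧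
        (∑ i, ∑ j, a i * a j * G (x i) (x j)) =
          ⟪Ψ (∑ i, a i • φ (x i)), ∑ i, a i • φ (x i)⟫ := by
      intro n a x
      constructor
      · rw [← real_inner_self_eq_norm_sq, sum_inner]
        refine Finset.sum_congr rfl fun i _ => ?_
        rw [inner_sum]
        refine Finset.sum_congr rfl fun j _ => ?_
        rw [real_inner_smul_left, real_inner_smul_right, hφ]
        ring
      · have h : ⟪Ψ (∑ i, a i • φ (x i)), ∑ i, a i • φ (x i)⟫
            = ∑ i, ∑ j, a i * a j * G (x i) (x j) := by
          rw [map_sum, sum_inner]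
          refine Finset.sum_congr rfl fun i _ => ?_
          rw [inner_sum]
          refine Finset.sum_congr rfl fun j _ => ?_
          rw [map_smul, real_inner_smul_left, real_inner_smul_right, ← hG]
          ring
        exact h.symm
    have hbound : ∀ v : H, |⟪Ψ v, v⟫| ≤ ‖v‖ ^ 2 := by
      intro v
      calc |⟪Ψ v, v⟫| ≤ ‖Ψ v‖ * ‖v‖ := abs_real_inner_le_norm _ _
        _ ≤ ‖Ψ‖ * ‖v‖ * ‖v‖ :=
            mul_le_mul_of_nonneg_right (Ψ.le_opNorm v) (norm_nonneg v)
        _ ≤ 1 * ‖v‖ * ‖v‖ := by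
            have h1 := mul_le_mul_of_nonneg_right
              (mul_le_mul_of_nonneg_right hnorm (norm_nonneg v)) (norm_nonneg v)
            linarith
        _ = ‖v‖ ^ 2 := by ring
    constructor
    · constructor
      · intro x y
        show K x y + G x y = K y x + G y x
        rw [hK.1 x y, hGsym x y]
      · intro n a x
        obtain ⟨e1, e2⟩ := main n a x
        have hb := (abs_le.mp (hbound (∑ i, a i • φ (x i)))).1
        have split : ∑ i, ∑ j, a i * a j * (K (x i) (x j) + G (x i) (x j))
            = (∑ i, ∑ j, a i * a j * K (x i) (x j))
              + ∑ i, ∑ j, a i * a j * G (x i) (x j) := by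
          rw [← Finset.sum_add_distrib]
          exact Finset.sum_congr rfl fun i _ => by
            rw [← Finset.sum_add_distrib]
            exact Finset.sum_congr rfl fun j _ => by ring
        show (0:ℝ) ≤ ∑ i, ∑ j, a i * a j * (K (x i) (x j) + G (x i) (x j))
        rw [split, e1, e2]
        linarith
    · constructor
      · intro x y
        show K x y - G x y = K y x - G y x
        rw [hK.1 x y, hGsym x y]
      · intro n a x
        obtain ⟨e1, e2⟩ := main n a x
        have hb := (abs_le.mp (hbound (∑ i, a i • φ (x i)))).2
        have split : ∑ i, ∑ j, a i * a j * (K (x i) (x j) - G (x i) (x j))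
            = (∑ i, ∑ j, a i * a j * K (x i) (x j))
              - ∑ i, ∑ j, a i * a j * G (x i) (x j) := by
          rw [← Finset.sum_sub_distrib]
          exact Finset.sum_congr rfl fun i _ => by
            rw [← Finset.sum_sub_distrib]
            exact Finset.sum_congr rfl fun j _ => by ring
        show (0:ℝ) ≤ ∑ i, ∑ j, a i * a j * (K (x i) (x j) - G (x i) (x j))
        rw [split, e1, e2]
        linarith
end

section
/- Let X be a set, Ω a domain on X, K_Ω : Ω → ℝ, K a completion of K_Ω, and (H, φ) a realization of K. Then K is an extreme point of the convex set 𝒞(K_Ω) (i.e., whenever K = α K₁ + (1−α) K₂ with K₁, K₂ ∈ 𝒞(K_Ω) and 0 < α < 1, one has K₁ = K₂ = K) if and only if every self-adjoint continuous linear operator Ψ : H → H satisfying ⟪φ x, Ψ(φ y)⟫ = 0 for all (x,y) ∈ Ω is the zero operator. -/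
open scoped RealInnerProductSpace

/-- `K` is a completion of `KΩ` on the domain `Ω`. -/
def IsCompletion {X : Type*} (Ω : Set (X × X)) (KΩ : X → X → ℝ) (K : X → X → ℝ) : Prop :=
  IsKernel K ∧ ∀ x y, (x, y) ∈ Ω → K x y = KΩ x y

section Auxiliary

open Finsupp
open scoped NNReal

variable {X : Type*} {H : Type*} [NormedAddCommGroup H] [InnerProductSpace ℝ H]

/-- The bilinear form on finitely supported coefficient vectors induced by `J : X → X → ℝ`. -/
noncomputable def Qf (J : X → X → ℝ) : (X →₀ ℝ) →ₗ[ℝ] (X →₀ ℝ) →ₗ[ℝ] ℝ :=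
  Finsupp.linearCombination ℝ (fun x => Finsupp.linearCombination ℝ (J x))

lemma Qf_apply (J : X → X → ℝ) (c d : X →₀ ℝ) :
    Qf J c d = ∑ x ∈ c.support, ∑ y ∈ d.support, c x * d y * J x y := by
  simp only [Qf, linearCombination_apply, Finsupp.sum, LinearMap.coe_sum, Finset.sum_apply,
    LinearMap.smul_apply, smul_eq_mul]
  refine Finset.sum_congr rfl fun x _ => ?_
  rw [Finset.mul_sum]
  refine Finset.sum_congr rfl fun y _ => ?_
  ring

lemma Qf_single (J : X → X → ℝ) (x y : X) : Qf J (single x 1) (single y 1) = J x y := by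
  simp [Qf]

lemma inner_lc (φ : X → H) (c d : X →₀ ℝ) :
    ⟪Finsupp.linearCombination ℝ φ c, Finsupp.linearCombination ℝ φ d⟫
      = ∑ x ∈ c.support, ∑ y ∈ d.support, c x * d y * ⟪φ x, φ y⟫ := by
  rw [linearCombination_apply, linearCombination_apply, Finsupp.sum, Finsupp.sum, sum_inner]
  refine Finset.sum_congr rfl fun x _ => ?_
  rw [real_inner_smul_left, inner_sum, Finset.mul_sum]
  refine Finset.sum_congr rfl fun y _ => ?_
  rw [real_inner_smul_right]; ring

lemma pos_finsupp (J : X → X → ℝ)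
    (hJ : ∀ (n : ℕ) (α : Fin n → ℝ) (x : Fin n → X),
      0 ≤ ∑ i, ∑ j, α i * α j * J (x i) (x j)) (c : X →₀ ℝ) :
    0 ≤ ∑ x ∈ c.support, ∑ y ∈ c.support, c x * c y * J x y := by
  classical
  set s := c.support with hs
  let e := (Fintype.equivFin ↥s).symm
  have key : ∀ g : X → ℝ, ∑ i, g (e i) = ∑ x ∈ s, g x := by
    intro g
    rw [Equiv.sum_comp e (fun a : ↥s => g ↑a), Finset.sum_coe_sort]
  have h := hJ (Fintype.card ↥s) (fun i => c (e i)) (fun i => ((e i : X)))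
  refine h.trans_eq ?_
  rw [key (fun x => ∑ j, c x * c (e j) * J x (e j))]
  exact Finset.sum_congr rfl fun x _ => key (fun y => c x * c y * J x y)

lemma eq_zero_of_inner_dense {s : Set H} (hs : Dense s) (v : H)
    (h : ∀ u ∈ s, ⟪u, v⟫ = 0) : v = 0 := by
  have hfg : (fun u : H => ⟪u, v⟫) = fun _ : H => (0 : ℝ) :=
    Continuous.ext_on hs (continuous_id.inner continuous_const) continuous_const h
  have hv := congrFun hfg v
  rwa [real_inner_self_eq_norm_sq, pow_eq_zero_iff (n := 2) (by norm_num),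
    norm_eq_zero] at hv


lemma abs_le_of_scaled {q a b M : ℝ} (hM : 0 ≤ M) (ha0 : 0 ≤ a) (hb0 : 0 ≤ b)
    (h : ∀ t : ℝ, 0 < t → |q| ≤ M / 2 * (t ^ 2 * a ^ 2 + (t⁻¹) ^ 2 * b ^ 2)) :
    |q| ≤ M * a * b := by
  have key : ∀ δ : ℝ, 0 < δ → |q| ≤ M * (a + δ) * (b + δ) := by
    intro δ hδ
    have hA : 0 < a + δ := by linarith
    have hB : 0 < b + δ := by linarith
    have hu : 0 < (b + δ) / (a + δ) := div_pos hB hA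
    have ht0 : 0 < Real.sqrt ((b + δ) / (a + δ)) := Real.sqrt_pos.mpr hu
    have ht2 : Real.sqrt ((b + δ) / (a + δ)) ^ 2 = (b + δ) / (a + δ) := Real.sq_sqrt hu.le
    have hbnd := h _ ht0
    rw [ht2] at hbnd
    have hti : (Real.sqrt ((b + δ) / (a + δ)))⁻¹ ^ 2 = (a + δ) / (b + δ) := by
      rw [inv_pow, ht2, inv_div]
    rw [hti] at hbnd
    have e1 : (b + δ) / (a + δ) * a ^ 2 ≤ (a + δ) * (b + δ) := by
      rw [div_mul_eq_mul_div, div_le_iff₀ hA]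
      nlinarith [mul_le_mul_of_nonneg_left (show a ^ 2 ≤ (a + δ) ^ 2 by nlinarith) hB.le]
    have e2 : (a + δ) / (b + δ) * b ^ 2 ≤ (a + δ) * (b + δ) := by
      rw [div_mul_eq_mul_div, div_le_iff₀ hB]
      nlinarith [mul_le_mul_of_nonneg_left (show b ^ 2 ≤ (b + δ) ^ 2 by nlinarith) hA.le]
    nlinarith [mul_le_mul_of_nonneg_left e1 (show (0:ℝ) ≤ M / 2 by linarith),
      mul_le_mul_of_nonneg_left e2 (show (0:ℝ) ≤ M / 2 by linarith)]
  have htend : Filter.Tendsto (fun δ : ℝ => M * (a + δ) * (b + δ)) (nhdsWithin 0 (Set.Ioi 0))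
      (nhds (M * a * b)) := by
    have hc : ContinuousAt (fun δ : ℝ => M * (a + δ) * (b + δ)) 0 := by fun_prop
    have h0 : Filter.Tendsto (fun δ : ℝ => M * (a + δ) * (b + δ)) (nhds 0)
        (nhds (M * a * b)) := by simpa using hc.tendsto
    exact h0.mono_left nhdsWithin_le_nhds
  exact ge_of_tendsto htend (by
    filter_upwards [self_mem_nhdsWithin] with δ hδ using key δ hδ)

lemma polar_bound (φ : X → H) (D : X → X → ℝ) (M : ℝ) (hM : 0 ≤ M)
    (hsymm : ∀ c d, Qf D c d = Qf D d c)
    (hdiag : ∀ c, |Qf D c c| ≤ M * ‖Finsupp.linearCombination ℝ φ c‖ ^ 2)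
    (c d : X →₀ ℝ) :
    |Qf D c d| ≤ M * ‖Finsupp.linearCombination ℝ φ c‖ * ‖Finsupp.linearCombination ℝ φ d‖ := by
  set V := Finsupp.linearCombination ℝ φ with hV
  have hstep : ∀ c d : X →₀ ℝ, |Qf D c d| ≤ M / 2 * (‖V c‖ ^ 2 + ‖V d‖ ^ 2) := by
    intro c d
    have h4 : Qf D c d = (Qf D (c + d) (c + d) - Qf D (c - d) (c - d)) / 4 := by
      have hcd := hsymm c d
      simp only [map_add, map_sub, LinearMap.add_apply, LinearMap.sub_apply]
      linarith
    have hpar : ‖V (c + d)‖ ^ 2 + ‖V (c - d)‖ ^ 2 = 2 * ‖V c‖ ^ 2 + 2 * ‖V d‖ ^ 2 := by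
      rw [map_add, map_sub]
      have h1 := norm_add_sq_real (V c) (V d)
      have h2 := norm_sub_sq_real (V c) (V d)
      linarith
    have h1 := hdiag (c + d); have h2 := hdiag (c - d)
    rw [abs_le] at h1 h2
    rw [h4, abs_le]
    constructor <;> nlinarith [hpar]
  refine abs_le_of_scaled hM (norm_nonneg _) (norm_nonneg _) ?_
  intro t ht
  have hq : Qf D (t • c) (t⁻¹ • d) = Qf D c d := by
    simp only [map_smul, LinearMap.smul_apply, smul_eq_mul]
    field_simp
  have hVn1 : ‖V (t • c)‖ ^ 2 = t ^ 2 * ‖V c‖ ^ 2 := by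
    rw [map_smul, norm_smul, mul_pow, Real.norm_eq_abs, sq_abs]
  have hVn2 : ‖V (t⁻¹ • d)‖ ^ 2 = (t⁻¹) ^ 2 * ‖V d‖ ^ 2 := by
    rw [map_smul, norm_smul, mul_pow, Real.norm_eq_abs, sq_abs]
  have hbnd := hstep (t • c) (t⁻¹ • d)
  rw [hq, hVn1, hVn2] at hbnd
  exact hbnd

lemma Qf_comm (J : X → X → ℝ) (hJ : ∀ x y, J x y = J y x) (c d : X →₀ ℝ) :
    Qf J c d = Qf J d c := by
  rw [Qf_apply, Qf_apply, Finset.sum_comm]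
  refine Finset.sum_congr rfl fun y _ => Finset.sum_congr rfl fun x _ => ?_
  rw [hJ]; ring

theorem exists_op [CompleteSpace H] (φ : X → H)
    (hdense : Dense (Submodule.span ℝ (Set.range φ) : Set H))
    (D : X → X → ℝ) (M : ℝ) (hM : 0 ≤ M)
    (hsymm : ∀ c d, Qf D c d = Qf D d c)
    (hb : ∀ c d : X →₀ ℝ, |Qf D c d| ≤
      M * ‖Finsupp.linearCombination ℝ φ c‖ * ‖Finsupp.linearCombination ℝ φ d‖) :
    ∃ Ψ : H →L[ℝ] H, (∀ f g : H, ⟪Ψ f, g⟫ = ⟪f, Ψ g⟫) ∧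
      ∀ x y, ⟪φ x, Ψ (φ y)⟫ = D x y := by
  classical
  set S := Submodule.span ℝ (Set.range φ) with hS
  set V := Finsupp.linearCombination ℝ φ with hVdef
  have hVS : ∀ c, V c ∈ S := fun c => by
    rw [hS, ← Finsupp.range_linearCombination]; exact LinearMap.mem_range_self _ _
  have hrepex : ∀ s : S, ∃ c, V c = (s : H) := fun s => by
    obtain ⟨c, hc⟩ := Finsupp.mem_span_range_iff_exists_finsupp.mp s.2
    exact ⟨c, by rw [hVdef, linearCombination_apply]; exact hc⟩
  choose rep hrep using hrepex
  -- vanishing on the kernel of V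
  have hker : ∀ c d, V c = 0 → Qf D c d = 0 := by
    intro c d h
    have h0 : |Qf D c d| ≤ 0 := by simpa [h] using hb c d
    exact abs_nonpos_iff.mp h0
  have hcongr₁ : ∀ c c' d, V c = V c' → Qf D c d = Qf D c' d := by
    intro c c' d h
    have h0 := hker (c - c') d (by rw [map_sub, h, sub_self])
    rw [map_sub, LinearMap.sub_apply] at h0
    linarith
  have hcongr₂ : ∀ c d d', V d = V d' → Qf D c d = Qf D c d' := by
    intro c d d' h
    rw [hsymm c d, hsymm c d']
    exact hcongr₁ d d' c h
  -- dense embedding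
  have hd : DenseRange (S.subtypeL : S → H) := hdense.denseRange_val
  have hu : IsUniformInducing (S.subtypeL : S → H) := isometry_subtype_coe.isUniformInducing
  -- the functionals
  have hnorm_coe : ∀ s : S, ‖(s : H)‖ = ‖s‖ := fun s => rfl
  set F₀ : (X →₀ ℝ) → (S →ₗ[ℝ] ℝ) := fun d =>
    { toFun := fun s => Qf D (rep s) d
      map_add' := fun s t => by
        show Qf D (rep (s + t)) d = Qf D (rep s) d + Qf D (rep t) d
        have h1 : V (rep (s + t)) = V (rep s + rep t) := by
          rw [map_add, hrep, hrep, hrep]; rfl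
        rw [hcongr₁ _ _ d h1, map_add, LinearMap.add_apply]
      map_smul' := fun a s => by
        show Qf D (rep (a • s)) d = a • Qf D (rep s) d
        have h1 : V (rep (a • s)) = V (a • rep s) := by
          rw [map_smul, hrep, hrep]; rfl
        rw [hcongr₁ _ _ d h1, map_smul]; rfl } with hF₀
  have hF₀bound : ∀ d (s : S), ‖F₀ d s‖ ≤ M * ‖V d‖ * ‖s‖ := by
    intro d s
    have h1 : |Qf D (rep s) d| ≤ M * ‖V (rep s)‖ * ‖V d‖ := hb _ _
    rw [hrep s] at h1
    show ‖Qf D (rep s) d‖ ≤ M * ‖V d‖ * ‖s‖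
    simpa [Real.norm_eq_abs, mul_comm, mul_left_comm, mul_assoc] using h1
  set F : (X →₀ ℝ) → (S →L[ℝ] ℝ) := fun d =>
    LinearMap.mkContinuous (F₀ d) (M * ‖V d‖) (hF₀bound d) with hF
  set G : (X →₀ ℝ) → (H →L[ℝ] ℝ) := fun d => (F d).extend S.subtypeL with hG
  set ψ : (X →₀ ℝ) → H := fun d => (InnerProductSpace.toDual ℝ H).symm (G d) with hψdef
  have hGapp : ∀ d c, G d (V c) = Qf D c d := by
    intro d c
    have h1 : (V c : H) = S.subtypeL ⟨V c, hVS c⟩ := rfl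
    rw [h1, hG]
    rw [ContinuousLinearMap.extend_eq _ hd hu]
    show Qf D (rep ⟨V c, hVS c⟩) d = Qf D c d
    exact hcongr₁ _ _ _ (by rw [hrep])
  have hψ : ∀ c d, ⟪V c, ψ d⟫ = Qf D c d := by
    intro c d
    rw [real_inner_comm, hψdef]
    rw [InnerProductSpace.toDual_symm_apply]
    exact hGapp d c
  have hψnorm : ∀ d, ‖ψ d‖ ≤ M * ‖V d‖ := by
    intro d
    have h1 : ‖ψ d‖ = ‖G d‖ := LinearIsometryEquiv.norm_map _ _
    have h2 : ‖G d‖ ≤ (1 : ℝ≥0) * ‖F d‖ :=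
      ContinuousLinearMap.opNorm_extend_le (F d) hd
        (N := 1) (fun x => by rw [NNReal.coe_one, one_mul]; rfl)
    have h3 : ‖F d‖ ≤ M * ‖V d‖ :=
      LinearMap.mkContinuous_norm_le _ (by positivity) _
    rw [h1]
    calc ‖G d‖ ≤ (1 : ℝ≥0) * ‖F d‖ := h2
      _ = ‖F d‖ := by rw [NNReal.coe_one, one_mul]
      _ ≤ M * ‖V d‖ := h3
  -- ψ only depends on V d, and is linear in that variable
  have hdense' : Dense (S : Set H) := hdense
  have hext : ∀ v w : H, (∀ c, ⟪V c, v⟫ = ⟪V c, w⟫) → v = w := by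
    intro v w h
    have : ∀ u ∈ (S : Set H), ⟪u, v - w⟫ = 0 := by
      intro u hu
      have h1 : V (rep ⟨u, hu⟩) = u := hrep ⟨u, hu⟩
      rw [inner_sub_right, ← h1, h (rep ⟨u, hu⟩), sub_self]
    have := eq_zero_of_inner_dense hdense' (v - w) this
    rwa [sub_eq_zero] at this
  have hinj : ∀ d d', V d = V d' → ψ d = ψ d' := by
    intro d d' h
    exact hext _ _ fun c => by rw [hψ, hψ, hcongr₂ c d d' h]
  have hψadd : ∀ d d', ψ (d + d') = ψ d + ψ d' := by
    intro d d'
    refine hext _ _ fun c => ?_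
    rw [hψ, map_add, inner_add_right, hψ, hψ]
  have hψsmul : ∀ (a : ℝ) d, ψ (a • d) = a • ψ d := by
    intro a d
    refine hext _ _ fun c => ?_
    rw [hψ, map_smul, real_inner_smul_right, hψ]; rfl
  -- the operator on S
  set Ψ₀ : S →ₗ[ℝ] H :=
    { toFun := fun s => ψ (rep s)
      map_add' := fun s t => by
        show ψ (rep (s + t)) = ψ (rep s) + ψ (rep t)
        have h1 : V (rep (s + t)) = V (rep s + rep t) := by
          rw [map_add, hrep, hrep, hrep]; rfl
        rw [hinj _ _ h1, hψadd]
      map_smul' := fun a s => by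
        show ψ (rep (a • s)) = a • ψ (rep s)
        have h1 : V (rep (a • s)) = V (a • rep s) := by
          rw [map_smul, hrep, hrep]; rfl
        rw [hinj _ _ h1, hψsmul] } with hΨ₀
  have hΨ₀bound : ∀ s : S, ‖Ψ₀ s‖ ≤ M * ‖s‖ := by
    intro s
    have := hψnorm (rep s)
    rw [hrep s] at this
    exact this
  set Ψ₁ : S →L[ℝ] H := LinearMap.mkContinuous Ψ₀ M hΨ₀bound with hΨ₁
  set Ψ : H →L[ℝ] H := Ψ₁.extend S.subtypeL with hΨdef
  have hΨV : ∀ c, Ψ (V c) = ψ c := by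
    intro c
    have h1 : (V c : H) = S.subtypeL ⟨V c, hVS c⟩ := rfl
    rw [h1, hΨdef, ContinuousLinearMap.extend_eq _ hd hu]
    show ψ (rep ⟨V c, hVS c⟩) = ψ c
    exact hinj _ _ (by rw [hrep])
  refine ⟨Ψ, ?_, ?_⟩
  · -- self-adjoint
    have hprod : Dense ((S : Set H) ×ˢ (S : Set H)) := hdense'.prod hdense'
    have hcont1 : Continuous fun p : H × H => ⟪Ψ p.1, p.2⟫ :=
      (Ψ.continuous.comp continuous_fst).inner continuous_snd
    have hcont2 : Continuous fun p : H × H => ⟪p.1, Ψ p.2⟫ :=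
      continuous_fst.inner (Ψ.continuous.comp continuous_snd)
    have heq : (fun p : H × H => ⟪Ψ p.1, p.2⟫) = fun p : H × H => ⟪p.1, Ψ p.2⟫ := by
      refine Continuous.ext_on hprod hcont1 hcont2 ?_
      rintro ⟨u, w⟩ ⟨hu, hw⟩
      have h1 : V (rep ⟨u, hu⟩) = u := hrep ⟨u, hu⟩
      have h2 : V (rep ⟨w, hw⟩) = w := hrep ⟨w, hw⟩
      show ⟪Ψ u, w⟫ = ⟪u, Ψ w⟫
      calc ⟪Ψ u, w⟫ = ⟪Ψ (V (rep ⟨u, hu⟩)), V (rep ⟨w, hw⟩)⟫ := by rw [h1, h2]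
        _ = ⟪ψ (rep ⟨u, hu⟩), V (rep ⟨w, hw⟩)⟫ := by rw [hΨV]
        _ = ⟪V (rep ⟨w, hw⟩), ψ (rep ⟨u, hu⟩)⟫ := real_inner_comm _ _
        _ = Qf D (rep ⟨w, hw⟩) (rep ⟨u, hu⟩) := hψ _ _
        _ = Qf D (rep ⟨u, hu⟩) (rep ⟨w, hw⟩) := hsymm _ _
        _ = ⟪V (rep ⟨u, hu⟩), ψ (rep ⟨w, hw⟩)⟫ := (hψ _ _).symm
        _ = ⟪u, Ψ w⟫ := by conv_rhs => rw [← h1, ← h2, hΨV]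
    intro f g
    exact congrFun heq (f, g)
  · intro x y
    have hx : φ x = V (single x 1) := by rw [hVdef]; simp
    have hy : φ y = V (single y 1) := by rw [hVdef]; simp
    rw [hy, hΨV, hx, hψ, Qf_single]

end Auxiliary

/-- A completion `K` is an extreme point of the set of completions iff the only self-adjoint
bounded operator `Ψ` on a realization of `K` with `⟪φ x, Ψ (φ y)⟫ = 0` on `Ω` is `Ψ = 0`. -/
theorem extremePoint_iff_selfAdjoint_vanishing {X H : Type*}
    [NormedAddCommGroup H] [InnerProductSpace ℝ H] [CompleteSpace H]
    (Ω : Set (X × X)) (hΩ : IsCompletionDomain Ω) (KΩ : X → X → ℝ)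
    (K : X → X → ℝ) (hK : IsCompletion Ω KΩ K)
    (φ : X → H) (hφ : ∀ s t, ⟪φ s, φ t⟫ = K s t)
    (hdense : Dense (Submodule.span ℝ (Set.range φ) : Set H)) :
    (∀ K₁ K₂ : X → X → ℝ, IsCompletion Ω KΩ K₁ → IsCompletion Ω KΩ K₂ →
      ∀ α : ℝ, 0 < α → α < 1 → K = α • K₁ + (1 - α) • K₂ → K₁ = K ∧ K₂ = K) ↔
    (∀ Ψ : H →L[ℝ] H, (∀ f g : H, ⟪Ψ f, g⟫ = ⟪f, Ψ g⟫) →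
      (∀ x y, (x, y) ∈ Ω → ⟪φ x, Ψ (φ y)⟫ = 0) → Ψ = 0) := by
  constructor
  · -- extreme point → vanishing operators
    intro hext Ψ hsa hvan
    set P : X → X → ℝ := fun x y => ⟪φ x, Ψ (φ y)⟫ with hP
    have hPsymm : ∀ x y, P x y = P y x := fun x y => by
      show ⟪φ x, Ψ (φ y)⟫ = ⟪φ y, Ψ (φ x)⟫
      rw [← hsa (φ x) (φ y), real_inner_comm]
    set ε : ℝ := (1 + ‖Ψ‖)⁻¹ with hε
    have hΨn : (0:ℝ) ≤ ‖Ψ‖ := norm_nonneg _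
    have hε0 : 0 < ε := by rw [hε]; positivity
    have hεΨ : ε * ‖Ψ‖ ≤ 1 := by
      rw [hε, inv_mul_le_iff₀ (by positivity)]
      linarith
    have hquad : ∀ v : H, |⟪v, Ψ v⟫| ≤ ‖Ψ‖ * ‖v‖ ^ 2 := fun v => by
      calc |⟪v, Ψ v⟫| ≤ ‖v‖ * ‖Ψ v‖ := abs_real_inner_le_norm _ _
        _ ≤ ‖v‖ * (‖Ψ‖ * ‖v‖) := by
            have := Ψ.le_opNorm v
            exact mul_le_mul_of_nonneg_left this (norm_nonneg v)
        _ = ‖Ψ‖ * ‖v‖ ^ 2 := by ring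
    have hsumP : ∀ (n : ℕ) (α : Fin n → ℝ) (x : Fin n → X),
        ∑ i, ∑ j, α i * α j * P (x i) (x j)
          = ⟪∑ i, α i • φ (x i), Ψ (∑ i, α i • φ (x i))⟫ := by
      intro n α x
      rw [map_sum, sum_inner]
      refine (Finset.sum_congr rfl fun i _ => ?_).symm
      rw [real_inner_smul_left, inner_sum, Finset.mul_sum]
      refine (Finset.sum_congr rfl fun j _ => ?_).symm
      rw [map_smul, real_inner_smul_right]
      ring
    have hsumK : ∀ (n : ℕ) (α : Fin n → ℝ) (x : Fin n → X),
        ∑ i, ∑ j, α i * α j * K (x i) (x j)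
          = ⟪∑ i, α i • φ (x i), ∑ i, α i • φ (x i)⟫ := by
      intro n α x
      rw [sum_inner]
      refine (Finset.sum_congr rfl fun i _ => ?_).symm
      rw [real_inner_smul_left, inner_sum, Finset.mul_sum]
      refine (Finset.sum_congr rfl fun j _ => ?_).symm
      rw [real_inner_smul_right, hφ]
      ring
    have hcomp : ∀ s : ℝ, |s| * ‖Ψ‖ ≤ 1 →
        IsCompletion Ω KΩ (fun x y => K x y + s * P x y) := by
      intro s hs
      refine ⟨⟨fun x y => by
        show K x y + s * P x y = K y x + s * P y x
        rw [hK.1.1 x y, hPsymm x y], ?_⟩, ?_⟩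
      · intro n α x
        have hd : ∀ i j : Fin n, α i * α j * (K (x i) (x j) + s * P (x i) (x j))
            = α i * α j * K (x i) (x j) + s * (α i * α j * P (x i) (x j)) :=
          fun i j => by ring
        simp only [hd, Finset.sum_add_distrib, ← Finset.mul_sum]
        rw [hsumK, hsumP]
        set v := ∑ i, α i • φ (x i) with hv
        rw [real_inner_self_eq_norm_sq]
        have h1 := hquad v
        have h2 : -(|s| * |⟪v, Ψ v⟫|) ≤ s * ⟪v, Ψ v⟫ := by
          rw [← abs_mul]; exact neg_abs_le _
        have h3 : |s| * |⟪v, Ψ v⟫| ≤ |s| * (‖Ψ‖ * ‖v‖ ^ 2) :=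
          mul_le_mul_of_nonneg_left h1 (abs_nonneg s)
        nlinarith [sq_nonneg ‖v‖, mul_le_mul_of_nonneg_right hs (sq_nonneg ‖v‖)]
      · intro x y hxy
        show K x y + s * P x y = KΩ x y
        have hz : P x y = 0 := hvan x y hxy
        rw [hz, mul_zero, add_zero]
        exact hK.2 x y hxy
    have h1c := hcomp ε (by rwa [abs_of_pos hε0])
    have h2c := hcomp (-ε) (by rwa [abs_neg, abs_of_pos hε0])
    have hconv : K = (1/2 : ℝ) • (fun x y => K x y + ε * P x y)
        + (1 - 1/2 : ℝ) • (fun x y => K x y + (-ε) * P x y) := by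
      funext x y
      simp only [Pi.add_apply, Pi.smul_apply, smul_eq_mul]
      ring
    obtain ⟨hK1, -⟩ := hext _ _ h1c h2c (1/2) (by norm_num) (by norm_num) hconv
    have hP0 : ∀ x y, P x y = 0 := by
      intro x y
      have h : K x y + ε * P x y = K x y := congrFun (congrFun hK1 x) y
      have hε' : ε * P x y = 0 := by linarith
      rcases mul_eq_zero.mp hε' with h' | h'
      · exact absurd h' (ne_of_gt hε0)
      · exact h'
    have hspan1 : ∀ t ∈ Submodule.span ℝ (Set.range φ), ∀ x, ⟪φ x, Ψ t⟫ = 0 := by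
      intro t ht
      refine Submodule.span_induction (p := fun t _ => ∀ x, ⟪φ x, Ψ t⟫ = 0) ?_ ?_ ?_ ?_ ht
      · rintro u ⟨y, rfl⟩ x
        exact hP0 x y
      · intro x; rw [map_zero, inner_zero_right]
      · intro u w hu hw a1 a2 x
        rw [map_add, inner_add_right, a1 x, a2 x, add_zero]
      · intro a u hu a1 x
        rw [map_smul, real_inner_smul_right, a1 x, mul_zero]
    have hspan2 : ∀ t ∈ (Submodule.span ℝ (Set.range φ) : Set H), Ψ t = 0 := by
      intro t ht
      refine eq_zero_of_inner_dense hdense (Ψ t) ?_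
      intro u hu
      refine Submodule.span_induction (p := fun u _ => ⟪u, Ψ t⟫ = 0) ?_ ?_ ?_ ?_ hu
      · rintro w ⟨x, rfl⟩
        exact hspan1 t ht x
      · show ⟪(0:H), Ψ t⟫ = 0
        rw [inner_zero_left]
      · intro w w' _ _ a1 a2; rw [inner_add_left, a1, a2, add_zero]
      · intro a w _ a1; rw [real_inner_smul_left, a1, mul_zero]
    have hΨeq : (Ψ : H → H) = fun _ => 0 :=
      Continuous.ext_on hdense Ψ.continuous continuous_const hspan2
    ext v
    simpa using congrFun hΨeq v
  · -- vanishing operators → extreme point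
    intro hop K₁ K₂ hc1 hc2 α hα0 hα1 hconv
    classical
    have hpt : ∀ x y, K x y = α * K₁ x y + (1 - α) * K₂ x y := by
      intro x y
      have h := congrFun (congrFun hconv x) y
      simpa using h
    set D : X → X → ℝ := fun x y => K₁ x y - K x y with hD
    have hDsymm : ∀ x y, D x y = D y x := fun x y => by
      show K₁ x y - K x y = K₁ y x - K y x
      rw [hc1.1.1 x y, hK.1.1 x y]
    have hQsymm : ∀ c d, Qf D c d = Qf D d c := Qf_comm D hDsymm
    set M : ℝ := max 1 ((1 - α) / α) with hM
    have hM1 : (1:ℝ) ≤ M := le_max_left _ _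
    have hM2 : (1 - α) / α ≤ M := le_max_right _ _
    have hM0 : (0:ℝ) ≤ M := le_trans zero_le_one hM1
    set V := Finsupp.linearCombination ℝ φ with hV
    have hdiag : ∀ c : X →₀ ℝ, |Qf D c c| ≤ M * ‖V c‖ ^ 2 := by
      intro c
      have e1 : ‖V c‖ ^ 2 = ∑ x ∈ c.support, ∑ y ∈ c.support, c x * c y * K x y := by
        rw [← real_inner_self_eq_norm_sq, hV, inner_lc]
        exact Finset.sum_congr rfl fun x _ => Finset.sum_congr rfl fun y _ => by rw [hφ]
      have eQ : Qf D c c = (∑ x ∈ c.support, ∑ y ∈ c.support, c x * c y * K₁ x y)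
          - ∑ x ∈ c.support, ∑ y ∈ c.support, c x * c y * K x y := by
        rw [Qf_apply]
        have hterm : ∀ x y, c x * c y * D x y
            = c x * c y * K₁ x y - c x * c y * K x y := fun x y => by
          show c x * c y * (K₁ x y - K x y) = _
          ring
        simp only [hterm, Finset.sum_sub_distrib]
      have p1 : 0 ≤ ∑ x ∈ c.support, ∑ y ∈ c.support, c x * c y * K x y :=
        pos_finsupp K hK.1.2 c
      have pK1 : 0 ≤ ∑ x ∈ c.support, ∑ y ∈ c.support, c x * c y * K₁ x y :=
        pos_finsupp K₁ hc1.1.2 c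
      have pK2 : 0 ≤ ∑ x ∈ c.support, ∑ y ∈ c.support, c x * c y * K₂ x y :=
        pos_finsupp K₂ hc2.1.2 c
      have hcomb : ∑ x ∈ c.support, ∑ y ∈ c.support, c x * c y * K x y
          = α * (∑ x ∈ c.support, ∑ y ∈ c.support, c x * c y * K₁ x y)
            + (1 - α) * ∑ x ∈ c.support, ∑ y ∈ c.support, c x * c y * K₂ x y := by
        have hterm : ∀ x y, c x * c y * K x y
            = α * (c x * c y * K₁ x y) + (1 - α) * (c x * c y * K₂ x y) := fun x y => by
          rw [hpt x y]; ring
        simp only [hterm, Finset.sum_add_distrib, ← Finset.mul_sum]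
      have hαM : 1 - α ≤ α * M := by
        have := (div_le_iff₀ hα0).mp hM2
        linarith
      rw [abs_le, eQ, e1]
      constructor
      · nlinarith
      · nlinarith [mul_pos hα0 hα0]
    have hbound := fun c d => polar_bound φ D M hM0 hQsymm hdiag c d
    obtain ⟨Ψ, hΨsa, hΨprop⟩ := exists_op φ hdense D M hM0 hQsymm hbound
    have hvanΩ : ∀ x y, (x, y) ∈ Ω → ⟪φ x, Ψ (φ y)⟫ = 0 := by
      intro x y hxy
      rw [hΨprop]
      show K₁ x y - K x y = 0
      rw [hc1.2 x y hxy, hK.2 x y hxy, sub_self]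
    have hΨ0 := hop Ψ hΨsa hvanΩ
    have hDzero : ∀ x y, K₁ x y = K x y := by
      intro x y
      have h := hΨprop x y
      rw [hΨ0] at h
      simp only [ContinuousLinearMap.zero_apply, inner_zero_right] at h
      have h2 : K₁ x y - K x y = 0 := h.symm
      linarith
    have hK1 : K₁ = K := funext fun x => funext fun y => hDzero x y
    refine ⟨hK1, ?_⟩
    funext x y
    have h := hpt x y
    rw [hDzero x y] at h
    have hne : (1 : ℝ) - α ≠ 0 := by linarith
    have hmul : (1 - α) * K₂ x y = (1 - α) * K x y := by linarith
    exact mul_left_cancel₀ hne hmul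
end

section
/- Let X be a set, Ω a domain on X, and K_Ω : Ω → ℝ. Then K_Ω admits a completion if and only if for every finite subset F ⊆ X, the restriction of K_Ω to Ω ∩ (F × F) admits a completion on F, i.e., there is a reproducing kernel on F agreeing with K_Ω on Ω ∩ (F × F). -/
lemma kernel_quadratic {Y : Type*} (K : Y → Y → ℝ) (hK : IsKernel K) (x y : Y) (s : ℝ) :
    0 ≤ K x x * (s * s) + (2 * K x y) * s + K y y := by
  have h := hK.2 2 ![s, 1] ![x, y]
  have hsym := hK.1 x y
  simp [Fin.sum_univ_two] at h
  rw [hsym] at h ⊢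
  ring_nf at h ⊢
  linarith [h]

lemma kernel_abs_le {Y : Type*} (K : Y → Y → ℝ) (hK : IsKernel K) (x y : Y) :
    |K x y| ≤ Real.sqrt (K x x * K y y) := by
  have hd := discrim_le_zero (kernel_quadratic K hK x y)
  rw [discrim] at hd
  have hb2 : K x y ^ 2 ≤ K x x * K y y := by nlinarith
  calc |K x y| = Real.sqrt (K x y ^ 2) := (Real.sqrt_sq_eq_abs _).symm
    _ ≤ Real.sqrt (K x x * K y y) := Real.sqrt_le_sqrt hb2

/-- `KΩ` admits a completion iff every finite restriction admits a completion. -/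
theorem completion_exists_iff_finite_subproblems {X : Type*}
    (Ω : Set (X × X)) (hΩ : IsCompletionDomain Ω) (KΩ : X → X → ℝ) :
    (∃ K : X → X → ℝ, IsCompletion Ω KΩ K) ↔
      ∀ F : Finset X, ∃ KF : F → F → ℝ, IsKernel KF ∧
        ∀ x y : F, ((x : X), (y : X)) ∈ Ω → KF x y = KΩ x y := by
  classical
  constructor
  · rintro ⟨K, hK, hKΩ⟩ F
    refine ⟨fun x y => K x y, ⟨fun x y => hK.1 x y, fun n α x => hK.2 n α fun i => x i⟩,
      fun x y h => hKΩ x y h⟩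
  · intro h
    set c : X → X → ℝ := fun x y => Real.sqrt (KΩ x x * KΩ y y) with hc
    have hcnn : ∀ x y, 0 ≤ c x y := fun x y => Real.sqrt_nonneg _
    set C : Set (X → X → ℝ) :=
      Set.pi Set.univ (fun x => Set.pi Set.univ (fun y => Set.Icc (-(c x y)) (c x y))) with hC
    have hCcomp : IsCompact C :=
      isCompact_univ_pi fun x => isCompact_univ_pi fun y => isCompact_Icc
    set A : Finset X → Set (X → X → ℝ) := fun F =>
      {K | (∀ x ∈ F, ∀ y ∈ F, K x y = K y x) ∧
           (∀ (n : ℕ) (α : Fin n → ℝ) (x : Fin n → X), (∀ i, x i ∈ F) →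
             0 ≤ ∑ i, ∑ j, α i * α j * K (x i) (x j)) ∧
           (∀ x ∈ F, ∀ y ∈ F, (x, y) ∈ Ω → K x y = KΩ x y)} with hA
    have hAmono : ∀ {F G : Finset X}, F ⊆ G → A G ⊆ A F := by
      intro F G hFG K hKmem
      exact ⟨fun x hx y hy => hKmem.1 x (hFG hx) y (hFG hy),
        fun n α x hx => hKmem.2.1 n α x fun i => hFG (hx i),
        fun x hx y hy => hKmem.2.2 x (hFG hx) y (hFG hy)⟩
    have hev : ∀ x y : X, Continuous fun K : X → X → ℝ => K x y := fun x y =>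
      (continuous_apply y).comp (continuous_apply x)
    have hAclosed : ∀ F, IsClosed (A F) := by
      intro F
      have hrw : A F = (⋂ x ∈ F, ⋂ y ∈ F, {K : X → X → ℝ | K x y = K y x}) ∩
          ((⋂ (n : ℕ) (α : Fin n → ℝ) (x : {f : Fin n → X // ∀ i, f i ∈ F}),
            {K : X → X → ℝ | 0 ≤ ∑ i, ∑ j, α i * α j * K (x.1 i) (x.1 j)}) ∩
           (⋂ x ∈ F, ⋂ y ∈ F, ⋂ (_ : (x, y) ∈ Ω), {K : X → X → ℝ | K x y = KΩ x y})) := by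
        ext K
        simp only [hA, Set.mem_inter_iff, Set.mem_iInter, Set.mem_setOf_eq]
        constructor
        · rintro ⟨h1, h2, h3⟩; exact ⟨h1, fun n α x => h2 n α x.1 x.2, h3⟩
        · rintro ⟨h1, h2, h3⟩; exact ⟨h1, fun n α x hx => h2 n α ⟨x, hx⟩, h3⟩
      rw [hrw]
      refine IsClosed.inter ?_ (IsClosed.inter ?_ ?_)
      · exact isClosed_biInter fun x _ => isClosed_biInter fun y _ =>
          isClosed_eq (hev x y) (hev y x)
      · refine isClosed_iInter fun n => isClosed_iInter fun α => isClosed_iInter fun x => ?_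
        exact isClosed_le continuous_const
          (continuous_finset_sum _ fun i _ => continuous_finset_sum _ fun j _ =>
            continuous_const.mul (hev _ _))
      · exact isClosed_biInter fun x _ => isClosed_biInter fun y _ =>
          isClosed_iInter fun _ => isClosed_eq (hev x y) continuous_const
    set t : Finset X → Set (X → X → ℝ) := fun F => A F ∩ C with ht
    have htne : ∀ F, (t F).Nonempty := by
      intro F
      obtain ⟨KF, hKF, hmatch⟩ := h F
      set K0 : X → X → ℝ := fun x y =>
        if hx : x ∈ F then if hy : y ∈ F then KF ⟨x, hx⟩ ⟨y, hy⟩ else 0 else 0 with hK0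
      have hK0eq : ∀ (x) (hx : x ∈ F) (y) (hy : y ∈ F), K0 x y = KF ⟨x, hx⟩ ⟨y, hy⟩ := by
        intro x hx y hy; simp [hK0, hx, hy]
      refine ⟨K0, ⟨?_, ?_, ?_⟩, ?_⟩
      · intro x hx y hy
        rw [hK0eq x hx y hy, hK0eq y hy x hx, hKF.1]
      · intro n α x hx
        have := hKF.2 n α fun i => ⟨x i, hx i⟩
        convert this using 2 with i
        refine Finset.sum_congr rfl fun j _ => ?_
        rw [hK0eq _ (hx i) _ (hx j)]
      · intro x hx y hy hxy
        rw [hK0eq x hx y hy]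
        exact hmatch ⟨x, hx⟩ ⟨y, hy⟩ hxy
      · intro x _
        intro y _
        by_cases hx : x ∈ F
        · by_cases hy : y ∈ F
          · rw [hK0eq x hx y hy]
            have hb := kernel_abs_le KF hKF ⟨x, hx⟩ ⟨y, hy⟩
            have hxx : KF ⟨x, hx⟩ ⟨x, hx⟩ = KΩ x x := hmatch _ _ (hΩ.2 x)
            have hyy : KF ⟨y, hy⟩ ⟨y, hy⟩ = KΩ y y := hmatch _ _ (hΩ.2 y)
            rw [hxx, hyy] at hb
            exact abs_le.mp hb
          · simp only [hK0, hx, hy, dif_pos, dif_neg, not_false_iff]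
            exact ⟨neg_nonpos.mpr (hcnn x y), hcnn x y⟩
        · simp only [hK0, hx, dif_neg, not_false_iff]
          exact ⟨neg_nonpos.mpr (hcnn x y), hcnn x y⟩
    have htdir : Directed (· ⊇ ·) t := by
      intro F G
      refine ⟨F ∪ G, ?_, ?_⟩
      · exact Set.inter_subset_inter_left _ (hAmono Finset.subset_union_left)
      · exact Set.inter_subset_inter_left _ (hAmono Finset.subset_union_right)
    have htcomp : ∀ F, IsCompact (t F) := fun F =>
      hCcomp.of_isClosed_subset ((hAclosed F).inter hCcomp.isClosed) Set.inter_subset_right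
    have htclosed : ∀ F, IsClosed (t F) := fun F =>
      (hAclosed F).inter hCcomp.isClosed
    obtain ⟨K, hK⟩ :=
      IsCompact.nonempty_iInter_of_directed_nonempty_isCompact_isClosed t htdir htne htcomp htclosed
    simp only [Set.mem_iInter] at hK
    refine ⟨K, ⟨?_, ?_⟩, ?_⟩
    · intro x y
      exact (hK {x, y}).1.1 x (by simp) y (by simp)
    · intro n α x
      exact (hK (Finset.image x Finset.univ)).1.2.1 n α x fun i =>
        Finset.mem_image_of_mem x (Finset.mem_univ i)
    · intro x y hxy
      exact (hK {x, y}).1.2.2 x (by simp) y (by simp) hxy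
end

section
/- Let X be a set, Ω a domain on X, and K_Ω : Ω → ℝ symmetric (K_Ω(x,y) = K_Ω(y,x) for all (x,y) ∈ Ω). Then K_Ω admits a completion if and only if for every n ≥ 1, every x_1,…,x_n ∈ X, and every real symmetric positive-semidefinite n × n matrix M = [m_{ij}] such that m_{ij} = 0 whenever (x_i, x_j) ∉ Ω, one has ∑_{(i,j) : (x_i,x_j) ∈ Ω} m_{ij} K_Ω(x_i, x_j) ≥ 0. -/
open scoped Classical

lemma psd_iff_sum {ι : Type*} [Fintype ι] (M : Matrix ι ι ℝ) :
    M.PosSemidef ↔ (∀ i j, M i j = M j i) ∧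
      ∀ v : ι → ℝ, 0 ≤ ∑ i, ∑ j, v i * v j * M i j := by
  have e : ∀ (v : ι → ℝ), dotProduct (star v) (M.mulVec v)
      = ∑ i, ∑ j, v i * v j * M i j := by
    intro v
    simp only [dotProduct, Matrix.mulVec, Pi.star_apply, star_trivial,
      Finset.mul_sum]
    exact Finset.sum_congr rfl fun i _ => Finset.sum_congr rfl fun j _ => by ring
  constructor
  · intro h
    refine ⟨fun i j => ?_, fun v => by rw [← e]; exact h.dotProduct_mulVec_nonneg v⟩
    have := congrFun (congrFun h.1 i) j
    simpa [Matrix.conjTranspose_apply] using this.symm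
  · rintro ⟨h1, h2⟩
    refine Matrix.posSemidef_iff_dotProduct_mulVec.2 ⟨?_, fun v => by rw [e]; exact h2 v⟩
    ext i j
    simp [Matrix.conjTranspose_apply, h1 j i]

lemma psd_diag_nonneg {ι : Type*} [Fintype ι] {M : Matrix ι ι ℝ} (h : M.PosSemidef)
    (u : ι) : 0 ≤ M u u := by
  have := ((psd_iff_sum _).1 (h.submatrix (fun _ : Fin 1 => u))).2 (fun _ => 1)
  simpa using this

lemma psd_entry_sq_le {ι : Type*} [Fintype ι] {M : Matrix ι ι ℝ} (h : M.PosSemidef)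
    (u v : ι) : M u v ^ 2 ≤ M u u * M v v := by
  have hsym : M v u = M u v := ((psd_iff_sum _).1 h).1 v u
  have hq := ((psd_iff_sum _).1 (h.submatrix ![u, v])).2
  have key : ∀ t : ℝ, 0 ≤ M u u * (t * t) + (2 * M u v) * t + M v v := by
    intro t
    have := hq ![t, 1]
    simp [Fin.sum_univ_two, Matrix.submatrix_apply, hsym] at this
    nlinarith [this]
  have := discrim_le_zero key
  rw [discrim] at this
  nlinarith

lemma psd_abs_entry_le {ι : Type*} [Fintype ι] {M : Matrix ι ι ℝ} (h : M.PosSemidef)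
    (u v : ι) : |M u v| ≤ Real.sqrt (M u u * M v v) := by
  rw [← Real.sqrt_sq_eq_abs]
  exact Real.sqrt_le_sqrt (psd_entry_sq_le h u v)

lemma finite_ext {X : Type*} (Ω : Set (X × X)) (hΩ : IsCompletionDomain Ω) (KΩ : X → X → ℝ)
    (hsymm : ∀ x y, (x, y) ∈ Ω → KΩ x y = KΩ y x)
    (crit : ∀ (n : ℕ), 1 ≤ n → ∀ (x : Fin n → X) (M : Matrix (Fin n) (Fin n) ℝ),
        M.PosSemidef → (∀ i j, (x i, x j) ∉ Ω → M i j = 0) →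
        0 ≤ ∑ i, ∑ j, if (x i, x j) ∈ Ω then M i j * KΩ (x i) (x j) else 0)
    (ι : Type*) [Fintype ι] (x : ι → X) :
    ∃ A : Matrix ι ι ℝ, A.PosSemidef ∧ ∀ u v, (x u, x v) ∈ Ω → A u v = KΩ (x u) (x v) := by
  rcases isEmpty_or_nonempty ι with hι | hι
  · exact ⟨0, Matrix.PosSemidef.zero, fun u => (IsEmpty.false u).elim⟩
  -- Work in the space E of functions on pairs
  let P : ((ι × ι) → ℝ) →ₗ[ℝ] ((ι × ι) → ℝ) :=
    { toFun := fun a p => if (x p.1, x p.2) ∈ Ω then a p else 0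
      map_add' := by
        intro a c; funext p; by_cases h : (x p.1, x p.2) ∈ Ω <;> simp [h, Pi.add_apply]
      map_smul' := by
        intro c a; funext p; by_cases h : (x p.1, x p.2) ∈ Ω <;> simp [h, Pi.smul_apply] }
  let D : Set ((ι × ι) → ℝ) := {a | (∀ u v, a (u, v) = a (v, u)) ∧
      ∀ w : ι → ℝ, 0 ≤ ∑ u, ∑ v, w u * w v * a (u, v)}
  have hDmat : ∀ a ∈ D, (Matrix.of fun u v => a (u, v)).PosSemidef := by
    intro a ha
    exact (psd_iff_sum _).2 ⟨fun u v => ha.1 u v, ha.2⟩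
  let C : Set ((ι × ι) → ℝ) := P '' D
  let b : (ι × ι) → ℝ := fun p => if (x p.1, x p.2) ∈ Ω then KΩ (x p.1) (x p.2) else 0
  suffices hb : b ∈ C by
    obtain ⟨a, haD, hPa⟩ := hb
    refine ⟨Matrix.of fun u v => a (u, v), hDmat a haD, fun u v huv => ?_⟩
    have := congrFun hPa (u, v)
    simpa [P, b, huv] using this
  by_contra hbC
  have hDclosed : IsClosed D := by
    have : D = {a : (ι × ι) → ℝ | ∀ u v, a (u, v) = a (v, u)} ∩
        ⋂ w : ι → ℝ, {a : (ι × ι) → ℝ | 0 ≤ ∑ u, ∑ v, w u * w v * a (u, v)} := by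
      ext a; simp only [Set.mem_inter_iff, Set.mem_iInter, Set.mem_setOf_eq]; rfl
    rw [this]
    refine IsClosed.inter ?_ (isClosed_iInter fun w => ?_)
    · have : {a : (ι × ι) → ℝ | ∀ u v, a (u, v) = a (v, u)} =
          ⋂ u, ⋂ v, {a : (ι × ι) → ℝ | a (u, v) = a (v, u)} := by ext; simp
      rw [this]
      exact isClosed_iInter fun u => isClosed_iInter fun v =>
        isClosed_eq (continuous_apply _) (continuous_apply _)
    · exact isClosed_le continuous_const
        (continuous_finset_sum _ fun u _ => continuous_finset_sum _ fun v _ =>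
          continuous_const.mul (continuous_apply ((u, v) : ι × ι)))
  have hDsmul : ∀ (t : ℝ), 0 ≤ t → ∀ a ∈ D, t • a ∈ D := by
    intro t ht a ha
    refine ⟨fun u v => by simp [ha.1 u v], fun w => ?_⟩
    have : ∑ u, ∑ v, w u * w v * (t • a) (u, v) = t * ∑ u, ∑ v, w u * w v * a (u, v) := by
      simp only [Pi.smul_apply, smul_eq_mul, Finset.mul_sum]
      exact Finset.sum_congr rfl fun u _ => Finset.sum_congr rfl fun v _ => by ring
    rw [this]
    exact mul_nonneg ht (ha.2 w)
  have hDconv : Convex ℝ D := by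
    intro a ha c hc s t hs ht hst
    refine ⟨fun u v => by simp [ha.1 u v, hc.1 u v], fun w => ?_⟩
    have : ∑ u, ∑ v, w u * w v * (s • a + t • c) (u, v)
        = s * (∑ u, ∑ v, w u * w v * a (u, v)) + t * (∑ u, ∑ v, w u * w v * c (u, v)) := by
      simp only [Pi.add_apply, Pi.smul_apply, smul_eq_mul, Finset.mul_sum,
        ← Finset.sum_add_distrib]
      exact Finset.sum_congr rfl fun u _ => Finset.sum_congr rfl fun v _ => by ring
    rw [this]
    exact add_nonneg (mul_nonneg hs (ha.2 w)) (mul_nonneg ht (hc.2 w))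
  have hker : ∀ a ∈ D, P a = 0 → a = 0 := by
    intro a ha hPa
    have hdiag : ∀ u, a (u, u) = 0 := by
      intro u
      have := congrFun hPa (u, u)
      simpa [P, hΩ.2 (x u)] using this
    funext p
    rcases p with ⟨u, v⟩
    have h1 := psd_entry_sq_le (hDmat a ha) u v
    simp only [Matrix.of_apply, hdiag u, hdiag v, mul_zero, zero_mul] at h1
    have : a (u, v) = 0 := by nlinarith [sq_nonneg (a (u, v))]
    simpa using this
  have hPcont : Continuous P := P.continuous_of_finiteDimensional
  obtain ⟨c, hc0, hcle⟩ : ∃ c : ℝ, 0 < c ∧ ∀ a ∈ D, c * ‖a‖ ≤ ‖P a‖ := by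
    rcases Set.eq_empty_or_nonempty (D ∩ Metric.sphere 0 1) with hS | hS
    · refine ⟨1, one_pos, fun a ha => ?_⟩
      rcases eq_or_ne a 0 with rfl | hne
      · simp
      · exfalso
        have h1 : ‖a‖⁻¹ • a ∈ D := hDsmul _ (inv_nonneg.2 (norm_nonneg a)) a ha
        have h2 : ‖a‖⁻¹ • a ∈ Metric.sphere 0 1 := by
          simp [norm_smul, abs_of_nonneg (inv_nonneg.2 (norm_nonneg a)),
            inv_mul_cancel₀ (norm_ne_zero_iff.2 hne)]
        exact (Set.eq_empty_iff_forall_notMem.1 hS _) ⟨h1, h2⟩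
    · have hScpt : IsCompact (D ∩ Metric.sphere 0 1) :=
        Metric.isCompact_of_isClosed_isBounded (hDclosed.inter Metric.isClosed_sphere)
          (Metric.isBounded_sphere.subset Set.inter_subset_right)
      obtain ⟨a₀, ha₀S, ha₀min'⟩ := hScpt.exists_isMinOn hS (hPcont.norm.continuousOn)
      have ha₀min : ∀ a ∈ D ∩ Metric.sphere 0 1, ‖P a₀‖ ≤ ‖P a‖ := fun a haa => ha₀min' haa
      have hc0 : 0 < ‖P a₀‖ := by
        rcases (norm_nonneg (P a₀)).lt_or_eq with h | h
        · exact h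
        · exfalso
          have hP0 : P a₀ = 0 := by simpa using h.symm
          have ha00 : a₀ = 0 := hker a₀ ha₀S.1 hP0
          have hsp := ha₀S.2
          rw [ha00] at hsp
          simp at hsp
      refine ⟨‖P a₀‖, hc0, fun a ha => ?_⟩
      rcases eq_or_ne a 0 with rfl | hne
      · simp
      · have hna : 0 < ‖a‖ := norm_pos_iff.2 hne
        have h1 : ‖a‖⁻¹ • a ∈ D := hDsmul _ (inv_nonneg.2 (norm_nonneg a)) a ha
        have h2 : ‖a‖⁻¹ • a ∈ Metric.sphere 0 1 := by
          simp [norm_smul, abs_of_nonneg (inv_nonneg.2 (norm_nonneg a)),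
            inv_mul_cancel₀ (norm_ne_zero_iff.2 hne)]
        have h3 := ha₀min _ ⟨h1, h2⟩
        rw [map_smul, norm_smul] at h3
        simp only [norm_inv, norm_norm] at h3
        rw [mul_comm]
        calc ‖a‖ * ‖P a₀‖ ≤ ‖a‖ * (‖a‖⁻¹ * ‖P a‖) := by
              exact mul_le_mul_of_nonneg_left h3 (norm_nonneg a)
        _ = ‖P a‖ := by field_simp
  have hCclosed : IsClosed C := by
    apply isClosed_of_closure_subset
    intro y hy
    have h1 : y ∈ closure (C ∩ Metric.closedBall 0 (‖y‖ + 1)) := by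
      rw [mem_closure_iff] at hy ⊢
      intro o ho hyo
      obtain ⟨z, hzo, hzC⟩ := hy (o ∩ Metric.ball y 1) (ho.inter Metric.isOpen_ball)
        ⟨hyo, Metric.mem_ball_self one_pos⟩
      refine ⟨z, hzo.1, hzC, ?_⟩
      rw [Metric.mem_closedBall, dist_zero_right]
      have hd : dist z y < 1 := hzo.2
      calc ‖z‖ = dist z 0 := (dist_zero_right z).symm
      _ ≤ dist z y + dist y 0 := dist_triangle _ _ _
      _ ≤ 1 + ‖y‖ := by rw [dist_zero_right]; linarith
      _ = ‖y‖ + 1 := by ring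
    have h2 : C ∩ Metric.closedBall 0 (‖y‖ + 1) ⊆
        P '' (D ∩ Metric.closedBall 0 ((‖y‖ + 1) / c)) := by
      rintro z ⟨⟨a, haD, rfl⟩, hz⟩
      refine ⟨a, ⟨haD, ?_⟩, rfl⟩
      rw [Metric.mem_closedBall, dist_zero_right] at hz ⊢
      have hle := hcle a haD
      rw [le_div_iff₀ hc0, mul_comm]
      linarith
    have h3 : IsCompact (P '' (D ∩ Metric.closedBall 0 ((‖y‖ + 1) / c))) :=
      (Metric.isCompact_of_isClosed_isBounded (hDclosed.inter Metric.isClosed_closedBall)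
        (Metric.isBounded_closedBall.subset Set.inter_subset_right)).image hPcont
    have h4 : y ∈ P '' (D ∩ Metric.closedBall 0 ((‖y‖ + 1) / c)) :=
      h3.isClosed.closure_subset ((closure_mono h2) h1)
    exact Set.image_mono Set.inter_subset_left h4
  have hCconv : Convex ℝ C := hDconv.is_linear_image P.isLinear
  obtain ⟨f, u0, hfu, hub⟩ := geometric_hahn_banach_closed_point hCconv hCclosed hbC
  have hD0 : (0 : (ι × ι) → ℝ) ∈ D :=
    ⟨fun u v => rfl, fun w => by simp⟩
  have hu0 : 0 < u0 := by
    have := hfu 0 ⟨0, hD0, map_zero P⟩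
    simpa using this
  have hfC : ∀ y ∈ C, f y ≤ 0 := by
    intro y hy
    by_contra hpos
    push_neg at hpos
    obtain ⟨a, haD, rfl⟩ := hy
    have h2 : ∀ t : ℝ, 0 ≤ t → t * f (P a) < u0 := fun t ht => by
      have hmem : P (t • a) ∈ C := ⟨t • a, hDsmul t ht a haD, rfl⟩
      have := hfu _ hmem
      rw [map_smul, map_smul] at this
      simpa [smul_eq_mul] using this
    have h3 := h2 (u0 / f (P a)) (le_of_lt (div_pos hu0 hpos))
    rw [div_mul_cancel₀ _ (ne_of_gt hpos)] at h3
    exact lt_irrefl _ h3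
  -- expansion of f in coordinates
  let φ : ι × ι → ℝ := fun p => f (Pi.single p 1)
  have hexp : ∀ a : (ι × ι) → ℝ, f a = ∑ p, a p * φ p := by
    intro a
    have ha : a = ∑ p : ι × ι, a p • (Pi.single p 1 : (ι × ι) → ℝ) := by
      conv_lhs => rw [← Finset.univ_sum_single a]
      exact Finset.sum_congr rfl fun p _ => by
        rw [← Pi.single_smul, smul_eq_mul, mul_one]
    conv_lhs => rw [ha]
    rw [map_sum]
    exact Finset.sum_congr rfl fun p _ => by rw [map_smul, smul_eq_mul]
  -- the dual matrix
  let m : Matrix ι ι ℝ := Matrix.of fun u v =>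
    if (x u, x v) ∈ Ω then -(φ (u, v) + φ (v, u)) / 2 else 0
  have hswap : ∀ u v : ι, ((x v, x u) ∈ Ω) = ((x u, x v) ∈ Ω) := by
    intro u v; exact propext (hΩ.1 (x v) (x u))
  have hkey : ∀ a : (ι × ι) → ℝ, (∀ u v, a (u, v) = a (v, u)) →
      ∑ u, ∑ v, a (u, v) * m u v = -(f (P a)) := by
    intro a ha
    have hPa : f (P a) = ∑ u, ∑ v, (if (x u, x v) ∈ Ω then a (u, v) * φ (u, v) else 0) := by
      rw [hexp (P a), Fintype.sum_prod_type]
      exact Finset.sum_congr rfl fun u _ => Finset.sum_congr rfl fun v _ => by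
        by_cases h : (x u, x v) ∈ Ω <;> simp [P, h]
    have hsw : ∑ u, ∑ v, (if (x u, x v) ∈ Ω then a (u, v) * φ (v, u) else 0)
        = ∑ u, ∑ v, (if (x u, x v) ∈ Ω then a (u, v) * φ (u, v) else 0) := by
      rw [Finset.sum_comm]
      refine Finset.sum_congr rfl fun u _ => Finset.sum_congr rfl fun v _ => ?_
      rw [hswap u v, ha v u]
    have lhs_eq : ∑ u, ∑ v, a (u, v) * m u v
        = ∑ u, ∑ v, ((-(1 : ℝ) / 2) * (if (x u, x v) ∈ Ω then a (u, v) * φ (u, v) else 0)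
          + (-(1 : ℝ) / 2) * (if (x u, x v) ∈ Ω then a (u, v) * φ (v, u) else 0)) := by
      refine Finset.sum_congr rfl fun u _ => Finset.sum_congr rfl fun v _ => ?_
      by_cases h : (x u, x v) ∈ Ω <;> simp [m, h] <;> ring
    rw [lhs_eq]
    simp only [Finset.sum_add_distrib, ← Finset.mul_sum]
    rw [hsw, hPa]
    ring
  have hmpsd : m.PosSemidef := by
    rw [psd_iff_sum]
    constructor
    · intro u v
      simp only [m, Matrix.of_apply]
      rw [hswap u v]
      by_cases h : (x u, x v) ∈ Ω <;> simp [h] <;> ring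
    · intro w
      let a : (ι × ι) → ℝ := fun p => w p.1 * w p.2
      have haD : a ∈ D := by
        refine ⟨fun u v => mul_comm _ _, fun w' => ?_⟩
        have : ∑ u, ∑ v, w' u * w' v * a (u, v)
            = (∑ u, w' u * w u) * (∑ v, w' v * w v) := by
          rw [Finset.sum_mul_sum]
          exact Finset.sum_congr rfl fun u _ => Finset.sum_congr rfl fun v _ => by
            simp only [a]; ring
        rw [this]
        exact mul_self_nonneg _
      have h1 : ∑ u, ∑ v, w u * w v * m u v = ∑ u, ∑ v, a (u, v) * m u v := by
        refine Finset.sum_congr rfl fun u _ => Finset.sum_congr rfl fun v _ => rfl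
      rw [h1, hkey a (fun u v => mul_comm _ _)]
      have := hfC (P a) ⟨a, haD, rfl⟩
      linarith
  -- apply the criterion to reach a contradiction
  let n := Fintype.card ι
  have hn1 : 1 ≤ n := Fintype.card_pos
  let e : Fin n ≃ ι := (Fintype.equivFin ι).symm
  have hsupp : ∀ i j, ((x ∘ e) i, (x ∘ e) j) ∉ Ω → m.submatrix e e i j = 0 := by
    intro i j hij
    simp only [Function.comp_apply] at hij
    simp only [Matrix.submatrix_apply, m, Matrix.of_apply]
    rw [if_neg hij]
  have hcrit := crit n hn1 (x ∘ e) (m.submatrix e e) (hmpsd.submatrix e) hsupp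
  have hb_symm : ∀ u v : ι, b (u, v) = b (v, u) := by
    intro u v
    simp only [b]
    rw [hswap u v]
    by_cases h : (x u, x v) ∈ Ω
    · simp [h, hsymm _ _ h]
    · simp [h]
  have hPb : P b = b := by
    funext p
    by_cases h : (x p.1, x p.2) ∈ Ω <;> simp [P, b, h]
  have hre : (∑ i, ∑ j, if ((x ∘ e) i, (x ∘ e) j) ∈ Ω
        then m.submatrix e e i j * KΩ ((x ∘ e) i) ((x ∘ e) j) else 0)
      = ∑ u, ∑ v, (if (x u, x v) ∈ Ω then m u v * KΩ (x u) (x v) else 0) := by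
    rw [← Equiv.sum_comp e
      (fun u => ∑ v, (if (x u, x v) ∈ Ω then m u v * KΩ (x u) (x v) else 0))]
    refine Finset.sum_congr rfl fun i _ => ?_
    rw [← Equiv.sum_comp e
      (fun v => if (x (e i), x v) ∈ Ω then m (e i) v * KΩ (x (e i)) (x v) else 0)]
    rfl
  have hfinal : (∑ u, ∑ v, (if (x u, x v) ∈ Ω then m u v * KΩ (x u) (x v) else 0))
      = ∑ u, ∑ v, b (u, v) * m u v := by
    refine Finset.sum_congr rfl fun u _ => Finset.sum_congr rfl fun v _ => ?_
    by_cases h : (x u, x v) ∈ Ω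
    · simp only [b, h, if_true]; ring
    · simp only [b, h, if_false, m, Matrix.of_apply, zero_mul]
  rw [hre, hfinal, hkey b hb_symm, hPb] at hcrit
  have : f b ≤ 0 := by linarith
  linarith


open scoped Classical in
/-- Paulsen's criterion: a symmetric `KΩ` admits a completion iff for every finite tuple of
points and every positive semidefinite matrix supported on `Ω`, the pairing with `KΩ` is
nonnegative. -/
theorem completion_exists_iff_paulsen {X : Type*}
    (Ω : Set (X × X)) (hΩ : IsCompletionDomain Ω) (KΩ : X → X → ℝ)
    (hsymm : ∀ x y, (x, y) ∈ Ω → KΩ x y = KΩ y x) :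
    (∃ K : X → X → ℝ, IsCompletion Ω KΩ K) ↔
      ∀ (n : ℕ), 1 ≤ n → ∀ (x : Fin n → X) (M : Matrix (Fin n) (Fin n) ℝ),
        M.PosSemidef → (∀ i j, (x i, x j) ∉ Ω → M i j = 0) →
        0 ≤ ∑ i, ∑ j, if (x i, x j) ∈ Ω then M i j * KΩ (x i) (x j) else 0 := by
  constructor
  · rintro ⟨K, ⟨⟨hKsymm, hKpsd⟩, hKres⟩⟩ n hn x M hM hsupp
    have h1 : (∑ i, ∑ j, if (x i, x j) ∈ Ω then M i j * KΩ (x i) (x j) else 0)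
        = ∑ i, ∑ j, M i j * K (x i) (x j) := by
      refine Finset.sum_congr rfl fun i _ => Finset.sum_congr rfl fun j _ => ?_
      by_cases h : (x i, x j) ∈ Ω
      · simp [h, hKres _ _ h]
      · simp [h, hsupp i j h]
    rw [h1]
    obtain ⟨B, hB⟩ : ∃ B : Matrix (Fin n) (Fin n) ℝ, M = B.conjTranspose * B := by
      open scoped MatrixOrder in exact CStarAlgebra.nonneg_iff_eq_star_mul_self.mp hM.nonneg
    have h2 : ∀ i j, M i j = ∑ k, B k i * B k j := by
      intro i j
      rw [hB]
      simp [Matrix.mul_apply, Matrix.conjTranspose_apply]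
    have h3 : (∑ i, ∑ j, M i j * K (x i) (x j))
        = ∑ i, ∑ j, ∑ k, B k i * B k j * K (x i) (x j) :=
      Finset.sum_congr rfl fun i _ => Finset.sum_congr rfl fun j _ => by
        rw [h2 i j, Finset.sum_mul]
    have h4 : (∑ i, ∑ j, ∑ k, B k i * B k j * K (x i) (x j))
        = ∑ i, ∑ k, ∑ j, B k i * B k j * K (x i) (x j) :=
      Finset.sum_congr rfl fun i _ => Finset.sum_comm
    have h5 : (∑ i, ∑ k, ∑ j, B k i * B k j * K (x i) (x j))
        = ∑ k, ∑ i, ∑ j, B k i * B k j * K (x i) (x j) := Finset.sum_comm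
    rw [h3, h4, h5]
    exact Finset.sum_nonneg fun k _ => hKpsd n (B k) x
  · intro crit
    -- diagonal values are nonnegative
    have hdiag : ∀ z : X, 0 ≤ KΩ z z := by
      intro z
      have h1 := crit 1 le_rfl (fun _ => z) 1 Matrix.PosSemidef.one
        (fun i j h => absurd (hΩ.2 z) h)
      simpa [Fin.sum_univ_one, hΩ.2 z] using h1
    set bnd : X × X → ℝ := fun p => Real.sqrt (KΩ p.1 p.1 * KΩ p.2 p.2) with hbnd
    set Box : Set (X × X → ℝ) := Set.pi Set.univ (fun p => Set.Icc (-(bnd p)) (bnd p))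
      with hBox
    have hBoxCpt : IsCompact Box := isCompact_univ_pi fun p => isCompact_Icc
    set S : Finset X → Set (X × X → ℝ) := fun F =>
      {f | f ∈ Box ∧ (∀ y ∈ F, ∀ z ∈ F, ((y, z) ∈ Ω → f (y, z) = KΩ y z) ∧
          f (y, z) = f (z, y)) ∧
        ∀ w : {a // a ∈ F} → ℝ,
          0 ≤ ∑ u : {a // a ∈ F}, ∑ v : {a // a ∈ F}, w u * w v * f (↑u, ↑v)} with hS
    have hSclosed : ∀ F, IsClosed (S F) := by
      intro F
      have hrepr : S F = Box ∩
          ((⋂ y : X, ⋂ z : X, ⋂ (_ : y ∈ F), ⋂ (_ : z ∈ F),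
            ({f : X × X → ℝ | (y, z) ∈ Ω → f (y, z) = KΩ y z} ∩
             {f : X × X → ℝ | f (y, z) = f (z, y)})) ∩
           ⋂ w : {a // a ∈ F} → ℝ,
             {f : X × X → ℝ | 0 ≤ ∑ u : {a // a ∈ F}, ∑ v : {a // a ∈ F},
               w u * w v * f (↑u, ↑v)}) := by
        ext f
        simp only [hS, Set.mem_setOf_eq, Set.mem_inter_iff, Set.mem_iInter]
        constructor
        · rintro ⟨h1, h2, h3⟩
          exact ⟨h1, fun y z hy hz => ⟨(h2 y hy z hz).1, (h2 y hy z hz).2⟩, h3⟩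
        · rintro ⟨h1, h2, h3⟩
          exact ⟨h1, fun y hy z hz => ⟨(h2 y z hy hz).1, (h2 y z hy hz).2⟩, h3⟩
      rw [hrepr]
      have hBoxClosed : IsClosed Box :=
        isClosed_set_pi fun p _ => isClosed_Icc
      refine hBoxClosed.inter (IsClosed.inter ?_ (isClosed_iInter fun w => ?_))
      · refine isClosed_iInter fun y => isClosed_iInter fun z =>
          isClosed_iInter fun _ => isClosed_iInter fun _ => IsClosed.inter ?_ ?_
        · by_cases h : (y, z) ∈ Ω
          · have : {f : X × X → ℝ | (y, z) ∈ Ω → f (y, z) = KΩ y z}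
                = {f : X × X → ℝ | f (y, z) = KΩ y z} := by
              ext f; simp [h]
            rw [this]
            exact isClosed_eq (continuous_apply _) continuous_const
          · have : {f : X × X → ℝ | (y, z) ∈ Ω → f (y, z) = KΩ y z} = Set.univ := by
              ext f; simp [h]
            rw [this]
            exact isClosed_univ
        · exact isClosed_eq (continuous_apply _) (continuous_apply _)
      · exact isClosed_le continuous_const
          (continuous_finset_sum _ fun u _ => continuous_finset_sum _ fun v _ =>
            continuous_const.mul (continuous_apply _))
    have hSmono : ∀ {F F' : Finset X}, F ⊆ F' → S F' ⊆ S F := by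
      intro F F' hFF' f hf
      refine ⟨hf.1, fun y hy z hz => hf.2.1 y (hFF' hy) z (hFF' hz), fun w => ?_⟩
      -- build matrix on F' and use submatrix
      have hB' : (Matrix.of fun u v : {a // a ∈ F'} => f (↑u, ↑v)).PosSemidef := by
        rw [psd_iff_sum]
        exact ⟨fun u v => (hf.2.1 ↑u u.2 ↑v v.2).2, hf.2.2⟩
      have hsub := hB'.submatrix (fun u : {a // a ∈ F} => (⟨↑u, hFF' u.2⟩ : {a // a ∈ F'}))
      exact ((psd_iff_sum _).1 hsub).2 w
    have hSnonempty : ∀ F : Finset X, (S F).Nonempty := by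
      intro F
      obtain ⟨A, hApsd, hAagree⟩ := finite_ext Ω hΩ KΩ hsymm crit {a // a ∈ F}
        (fun u => ↑u)
      have hAsymm : ∀ u v, A u v = A v u := ((psd_iff_sum _).1 hApsd).1
      have hAdiag : ∀ u : {a // a ∈ F}, A u u = KΩ ↑u ↑u :=
        fun u => hAagree u u (hΩ.2 ↑u)
      refine ⟨fun p => if h : p.1 ∈ F ∧ p.2 ∈ F then A ⟨p.1, h.1⟩ ⟨p.2, h.2⟩ else 0,
        ?_, fun y hy z hz => ?_, fun w => ?_⟩
      · intro p _
        dsimp only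
        by_cases h : p.1 ∈ F ∧ p.2 ∈ F
        · rw [dif_pos h]
          have := psd_abs_entry_le hApsd ⟨p.1, h.1⟩ ⟨p.2, h.2⟩
          rw [hAdiag, hAdiag] at this
          rw [Set.mem_Icc]
          constructor
          · have := neg_le_of_abs_le this; linarith [this]
          · exact le_of_abs_le this
        · rw [dif_neg h]
          exact ⟨neg_nonpos.2 (Real.sqrt_nonneg _), Real.sqrt_nonneg _⟩
      · dsimp only
        constructor
        · intro hyz
          rw [dif_pos ⟨hy, hz⟩]
          exact hAagree ⟨y, hy⟩ ⟨z, hz⟩ hyz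
        · rw [dif_pos ⟨hy, hz⟩, dif_pos ⟨hz, hy⟩]
          exact hAsymm _ _
      · have : ∀ u v : {a // a ∈ F},
            (if h : (↑u : X) ∈ F ∧ (↑v : X) ∈ F then A ⟨↑u, h.1⟩ ⟨↑v, h.2⟩ else 0)
              = A u v := by
          intro u v
          rw [dif_pos ⟨u.2, v.2⟩]
        simp only [this]
        exact ((psd_iff_sum _).1 hApsd).2 w
    have hSdir : Directed (· ⊇ ·) S := fun F F' =>
      ⟨F ∪ F', hSmono Finset.subset_union_left, hSmono Finset.subset_union_right⟩
    obtain ⟨f, hf⟩ := IsCompact.nonempty_iInter_of_directed_nonempty_isCompact_isClosed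
      S hSdir hSnonempty
      (fun F => (hBoxCpt.of_isClosed_subset (hSclosed F) (fun g hg => hg.1)))
      hSclosed
    simp only [Set.mem_iInter] at hf
    refine ⟨fun y z => f (y, z), ⟨⟨fun y z => ?_, fun n α x => ?_⟩, fun y z hyz => ?_⟩⟩
    · exact ((hf {y, z}).2.1 y (by simp) z (by simp)).2
    · set F := Finset.image x Finset.univ with hF
      have hBpsd : (Matrix.of fun u v : {a // a ∈ F} => f (↑u, ↑v)).PosSemidef := by
        rw [psd_iff_sum]
        exact ⟨fun u v => ((hf F).2.1 ↑u u.2 ↑v v.2).2, (hf F).2.2⟩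
      have hmem : ∀ i, x i ∈ F := fun i => Finset.mem_image_of_mem x (Finset.mem_univ i)
      have hsub := hBpsd.submatrix (fun i : Fin n => (⟨x i, hmem i⟩ : {a // a ∈ F}))
      exact ((psd_iff_sum _).1 hsub).2 α
    · exact ((hf {y, z}).2.1 y (by simp) z (by simp)).1 hyz
end

section
/- Let X = X₁ ∪ X₂ and Ω = (X₁ × X₁) ∪ (X₂ × X₂), let K_Ω be a partially reproducing kernel on Ω, and let (H₁, k₁) and (H₂, k₂) be realizations of K_{X₁} = K_Ω|_{X₁ × X₁} and K_{X₂} = K_Ω|_{X₂ × X₂} respectively. Then: (i) for every completion K of K_Ω there exists a unique continuous linear operator Φ : H₁ → H₂ with ‖Φ‖ ≤ 1 such that K(x,y) = ⟪Φ(k₁ x), k₂ y⟫ for all x ∈ X₁ and y ∈ X₂, and this Φ satisfies Φ(k₁ x) = k₂ x for all x ∈ X₁ ∩ X₂; (ii) conversely, for every continuous linear operator Φ : H₁ → H₂ with ‖Φ‖ ≤ 1 satisfying Φ(k₁ x) = k₂ x for all x ∈ X₁ ∩ X₂, the function K : X × X → ℝ defined by K(x,y) = K_Ω(x,y) for (x,y)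 ∈ Ω, K(x,y) = ⟪Φ(k₁ x), k₂ y⟫ for x ∈ X₁ ∖ X₂ and y ∈ X₂ ∖ X₁, and K(x,y) = ⟪Φ(k₁ y), k₂ x⟫ for x ∈ X₂ ∖ X₁ and y ∈ X₁ ∖ X₂, is a completion of K_Ω. -/
open scoped RealInnerProductSpace

/-- `KΩ` is a partially reproducing kernel on `Ω ⊆ X × X`: every restriction to a square
`A × A ⊆ Ω` is a reproducing kernel on `A`. -/
def IsPartialKernel {X : Type*} (Ω : Set (X × X)) (KΩ : X → X → ℝ) : Prop :=
  ∀ A : Set X, A ×ˢ A ⊆ Ω → IsKernel (fun a b : A => KΩ a b)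

lemma IsKernel.posSum {X : Type*} {K : X → X → ℝ} (hK : IsKernel K) {ι : Type*}
    (s : Finset ι) (α : ι → ℝ) (x : ι → X) :
    0 ≤ ∑ i ∈ s, ∑ j ∈ s, α i * α j * K (x i) (x j) := by
  classical
  have h := hK.2 s.card (fun i => α (s.equivFin.symm i)) (fun i => x (s.equivFin.symm i))
  have e1 : ∑ i ∈ s, ∑ j ∈ s, α i * α j * K (x i) (x j)
      = ∑ i : {y // y ∈ s}, ∑ j : {y // y ∈ s}, α i * α j * K (x i) (x j) := by
    rw [← Finset.sum_coe_sort s]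
    exact Finset.sum_congr rfl fun i _ => by rw [← Finset.sum_coe_sort s]
  rw [e1]
  refine le_of_le_of_eq h ?_
  exact Fintype.sum_equiv s.equivFin.symm _ _ fun i =>
    Fintype.sum_equiv s.equivFin.symm _ _ fun j => rfl

lemma IsKernel.cs {X : Type*} {K : X → X → ℝ} (hK : IsKernel K) {ι κ : Type*}
    (s : Finset ι) (t : Finset κ) (α : ι → ℝ) (β : κ → ℝ) (x : ι → X) (y : κ → X) :
    (∑ i ∈ s, ∑ j ∈ t, α i * β j * K (x i) (y j)) ^ 2 ≤
      (∑ i ∈ s, ∑ j ∈ s, α i * α j * K (x i) (x j)) *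
      (∑ i ∈ t, ∑ j ∈ t, β i * β j * K (y i) (y j)) := by
  classical
  set A := ∑ i ∈ s, ∑ j ∈ s, α i * α j * K (x i) (x j) with hA
  set C := ∑ i ∈ t, ∑ j ∈ t, β i * β j * K (y i) (y j) with hC
  set B := ∑ i ∈ s, ∑ j ∈ t, α i * β j * K (x i) (y j) with hB
  have key : ∀ c : ℝ, 0 ≤ C * (c * c) + (2 * B) * c + A := by
    intro c
    have h := hK.posSum (s.disjSum t) (Sum.elim α (fun j => c * β j)) (Sum.elim x y)
    have expand : ∑ i ∈ s.disjSum t, ∑ j ∈ s.disjSum t,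
        Sum.elim α (fun j => c * β j) i * Sum.elim α (fun j => c * β j) j *
          K (Sum.elim x y i) (Sum.elim x y j)
        = A + c * B + (c * B + c * c * C) := by
      rw [Finset.sum_disjSum]
      congr 1
      · rw [Finset.sum_congr rfl fun i _ => Finset.sum_disjSum s t _]
        rw [Finset.sum_add_distrib]
        refine congrArg₂ (· + ·) rfl ?_
        rw [hB, Finset.mul_sum]
        exact Finset.sum_congr rfl fun i _ => by
          rw [Finset.mul_sum]
          exact Finset.sum_congr rfl fun j _ => by simp; ring
      · rw [Finset.sum_congr rfl fun i _ => Finset.sum_disjSum s t _]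
        rw [Finset.sum_add_distrib]
        refine congrArg₂ (· + ·) ?_ ?_
        · rw [hB, Finset.mul_sum, Finset.sum_comm]
          exact Finset.sum_congr rfl fun i _ => by
            rw [Finset.mul_sum]
            exact Finset.sum_congr rfl fun j _ => by
              simp only [Sum.elim_inl, Sum.elim_inr]
              rw [hK.1 (y j) (x i)]; ring
        · rw [hC, Finset.mul_sum]
          exact Finset.sum_congr rfl fun i _ => by
            rw [Finset.mul_sum]
            exact Finset.sum_congr rfl fun j _ => by simp; ring
    rw [expand] at h
    nlinarith [h]
  have hd := discrim_le_zero key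
  rw [discrim] at hd
  nlinarith [hd]

lemma extend_factor {E H F : Type*} [AddCommGroup E] [Module ℝ E]
    [NormedAddCommGroup H] [NormedSpace ℝ H]
    [NormedAddCommGroup F] [NormedSpace ℝ F] [CompleteSpace F]
    (g : E →ₗ[ℝ] H) (f : E →ₗ[ℝ] F) (C : ℝ) (hC : 0 ≤ C)
    (hbound : ∀ c, ‖f c‖ ≤ C * ‖g c‖)
    (hdense : Dense ((LinearMap.range g : Submodule ℝ H) : Set H)) :
    ∃ T : H →L[ℝ] F, ‖T‖ ≤ C ∧ ∀ c, T (g c) = f c := by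
  have hker : LinearMap.ker g ≤ LinearMap.ker f := by
    intro c hc
    rw [LinearMap.mem_ker] at hc ⊢
    have := hbound c
    rw [hc, norm_zero, mul_zero] at this
    exact norm_le_zero_iff.mp this
  let q := g.quotKerEquivRange
  let T₀ : ↥(LinearMap.range g) →ₗ[ℝ] F :=
    (Submodule.liftQ (LinearMap.ker g) f hker).comp q.symm.toLinearMap
  have key : ∀ c : E, T₀ ⟨g c, LinearMap.mem_range_self g c⟩ = f c := by
    intro c
    have hq : q (Submodule.Quotient.mk c) = ⟨g c, LinearMap.mem_range_self g c⟩ := by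
      apply Subtype.ext
      simp [q, LinearMap.quotKerEquivRange]
    have : q.symm ⟨g c, LinearMap.mem_range_self g c⟩ = Submodule.Quotient.mk c := by
      rw [← hq, LinearEquiv.symm_apply_apply]
    simp only [T₀, LinearMap.comp_apply, LinearEquiv.coe_toLinearMap, this]
    exact Submodule.liftQ_apply _ _ _
  have hb : ∀ z : ↥(LinearMap.range g), ‖T₀ z‖ ≤ C * ‖z‖ := by
    rintro ⟨z, hz⟩
    obtain ⟨c, rfl⟩ := hz
    rw [key c]
    exact hbound c
  let T₁ : ↥(LinearMap.range g) →L[ℝ] F := T₀.mkContinuous C hb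
  have hT₁ : ∀ z, T₁ z = T₀ z := fun z => rfl
  have hui : IsUniformInducing ((LinearMap.range g).subtypeL : ↥(LinearMap.range g) →L[ℝ] H) :=
    isometry_subtype_coe.isUniformInducing
  have hdr : DenseRange ((LinearMap.range g).subtypeL : ↥(LinearMap.range g) →L[ℝ] H) := by
    have : Set.range ((LinearMap.range g).subtypeL : ↥(LinearMap.range g) →L[ℝ] H)
        = ((LinearMap.range g : Submodule ℝ H) : Set H) := Subtype.range_coe
    rw [DenseRange, this]; exact hdense
  let T : H →L[ℝ] F := T₁.extend (LinearMap.range g).subtypeL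
  have hTg : ∀ c : E, T (g c) = f c := by
    intro c
    have h1 := ContinuousLinearMap.extend_eq T₁ hdr hui
      ⟨g c, LinearMap.mem_range_self g c⟩
    rw [Submodule.subtypeL_apply] at h1
    rw [h1, LinearMap.mkContinuous_apply, key]
  refine ⟨T, ?_, hTg⟩
  · refine T.opNorm_le_bound hC ?_
    intro xx
    have hcl : IsClosed {w : H | ‖T w‖ ≤ C * ‖w‖} :=
      isClosed_le (T.continuous.norm) (continuous_const.mul continuous_norm)
    have hsub : ((LinearMap.range g : Submodule ℝ H) : Set H) ⊆ {w : H | ‖T w‖ ≤ C * ‖w‖} := by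
      rintro w ⟨c, rfl⟩
      simp only [Set.mem_setOf_eq, hTg c]
      exact hbound c
    have hdsub : Dense {w : H | ‖T w‖ ≤ C * ‖w‖} := hdense.mono hsub
    have : {w : H | ‖T w‖ ≤ C * ‖w‖} = Set.univ := by
      rw [← hcl.closure_eq]; exact hdsub.closure_eq
    exact (Set.eq_univ_iff_forall.mp this) xx

lemma lin_inner {A B H : Type*} [NormedAddCommGroup H] [InnerProductSpace ℝ H]
    (k : A → H) (m : B → H) (c : A →₀ ℝ) (d : B →₀ ℝ) :
    ⟪Finsupp.linearCombination ℝ k c, Finsupp.linearCombination ℝ m d⟫ =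
      ∑ u ∈ c.support, ∑ v ∈ d.support, c u * d v * ⟪k u, m v⟫ := by
  rw [Finsupp.linearCombination_apply, Finsupp.linearCombination_apply,
    Finsupp.sum, Finsupp.sum, sum_inner]
  refine Finset.sum_congr rfl fun u _ => ?_
  rw [inner_sum]
  refine Finset.sum_congr rfl fun v _ => ?_
  rw [real_inner_smul_left, real_inner_smul_right]; ring

lemma eq_of_inner_eq_on_dense {H : Type*} [NormedAddCommGroup H] [InnerProductSpace ℝ H]
    {s : Set H} (hd : Dense ((Submodule.span ℝ s : Submodule ℝ H) : Set H)) {x y : H}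
    (h : ∀ z ∈ s, ⟪x, z⟫ = ⟪y, z⟫) : x = y := by
  have : (innerSL ℝ x : H →L[ℝ] ℝ) = innerSL ℝ y :=
    ContinuousLinearMap.ext_on hd fun z hz => h z hz
  exact ext_inner_right ℝ fun w => by
    have := congrArg (fun T : H →L[ℝ] ℝ => T w) this
    simpa using this

lemma abs_le_of_sq_le' {a b : ℝ} (hb : 0 ≤ b) (h : a ^ 2 ≤ b ^ 2) : |a| ≤ b := by
  nlinarith [abs_nonneg a, sq_abs a]

lemma pos_part {X H₁ H₂ : Type*}
    [NormedAddCommGroup H₁] [InnerProductSpace ℝ H₁]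
    [NormedAddCommGroup H₂] [InnerProductSpace ℝ H₂]
    (X₁ X₂ : Set X) (hcover : X₁ ∪ X₂ = Set.univ)
    (KΩ : X → X → ℝ)
    (hsym2 : ∀ u v : X₂, KΩ u v = KΩ v u)
    (k₁ : X₁ → H₁) (hk₁ : ∀ u v : X₁, ⟪k₁ u, k₁ v⟫ = KΩ u v)
    (k₂ : X₂ → H₂) (hk₂ : ∀ u v : X₂, ⟪k₂ u, k₂ v⟫ = KΩ u v)
    (Φ : H₁ →L[ℝ] H₂) (hΦn : ‖Φ‖ ≤ 1)
    (hΦint : ∀ (u : X) (h1 : u ∈ X₁) (h2 : u ∈ X₂), Φ (k₁ ⟨u, h1⟩) = k₂ ⟨u, h2⟩)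
    (K : X → X → ℝ)
    (hKΩ : ∀ u v : X, (u, v) ∈ X₁ ×ˢ X₁ ∪ X₂ ×ˢ X₂ → K u v = KΩ u v)
    (hK12 : ∀ (u v : X) (h1 : u ∈ X₁) (h2 : v ∈ X₂), u ∉ X₂ → v ∉ X₁ →
      K u v = ⟪Φ (k₁ ⟨u, h1⟩), k₂ ⟨v, h2⟩⟫)
    (hK21 : ∀ (u v : X) (h2 : u ∈ X₂) (h1 : v ∈ X₁), u ∉ X₁ → v ∉ X₂ →
      K u v = ⟪Φ (k₁ ⟨v, h1⟩), k₂ ⟨u, h2⟩⟫)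
    (n : ℕ) (α : Fin n → ℝ) (x : Fin n → X) :
    0 ≤ ∑ i, ∑ j, α i * α j * K (x i) (x j) := by
  classical
  have hcov : ∀ u : X, u ∈ X₁ ∪ X₂ := fun u => hcover.symm ▸ Set.mem_univ u
  set k₁' : X → H₁ := fun u => if h : u ∈ X₁ then k₁ ⟨u, h⟩ else 0 with hk₁'
  set k₂' : X → H₂ := fun u => if h : u ∈ X₂ then k₂ ⟨u, h⟩ else 0 with hk₂'
  have hv₁ : ∀ (u : X) (h : u ∈ X₁), k₁' u = k₁ ⟨u, h⟩ := fun u h => by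
    simp only [hk₁', dif_pos h]
  have hv₂ : ∀ (u : X) (h : u ∈ X₂), k₂' u = k₂ ⟨u, h⟩ := fun u h => by
    simp only [hk₂', dif_pos h]
  set s₁ := Finset.univ.filter (fun i : Fin n => x i ∈ X₁) with hs₁
  set s₂ := Finset.univ.filter (fun i : Fin n => ¬ x i ∈ X₁) with hs₂
  have Hmem1 : ∀ i ∈ s₁, x i ∈ X₁ := fun i hi => (Finset.mem_filter.mp hi).2
  have Hmemn1 : ∀ i ∈ s₂, x i ∉ X₁ := fun i hi => (Finset.mem_filter.mp hi).2
  have Hmem2 : ∀ i ∈ s₂, x i ∈ X₂ := fun i hi =>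
    (hcov (x i)).resolve_left (Hmemn1 i hi)
  set ξ := ∑ i ∈ s₁, α i • k₁' (x i) with hξ
  set η := ∑ i ∈ s₂, α i • k₂' (x i) with hη
  -- cross-term pointwise identity
  have Tc : ∀ i j : Fin n, x i ∈ X₁ → x j ∈ X₂ → x j ∉ X₁ →
      K (x i) (x j) = ⟪Φ (k₁' (x i)), k₂' (x j)⟫ := by
    intro i j h1 h2 hn1
    rw [hv₁ _ h1, hv₂ _ h2]
    by_cases hu2 : x i ∈ X₂
    · rw [hKΩ _ _ (Or.inr ⟨hu2, h2⟩), hΦint (x i) h1 hu2, hk₂]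
    · exact hK12 (x i) (x j) h1 h2 hu2 hn1
  have Tc' : ∀ i j : Fin n, x i ∈ X₂ → x i ∉ X₁ → x j ∈ X₁ →
      K (x i) (x j) = ⟪Φ (k₁' (x j)), k₂' (x i)⟫ := by
    intro i j h2 hn1 h1
    rw [hv₁ _ h1, hv₂ _ h2]
    by_cases hj2 : x j ∈ X₂
    · rw [hKΩ _ _ (Or.inr ⟨h2, hj2⟩), hsym2 ⟨x i, h2⟩ ⟨x j, hj2⟩,
        hΦint (x j) h1 hj2, hk₂]
    · exact hK21 (x i) (x j) h2 h1 hn1 hj2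
  -- block identities
  have HB11 : ∑ i ∈ s₁, ∑ j ∈ s₁, α i * α j * K (x i) (x j) = ⟪ξ, ξ⟫ := by
    rw [hξ, sum_inner]
    refine Finset.sum_congr rfl fun i hi => ?_
    rw [inner_sum]
    refine Finset.sum_congr rfl fun j hj => ?_
    rw [real_inner_smul_left, real_inner_smul_right, hv₁ _ (Hmem1 i hi),
      hv₁ _ (Hmem1 j hj), hk₁, ← hKΩ _ _ (Or.inl ⟨Hmem1 i hi, Hmem1 j hj⟩)]
    ring
  have HB22 : ∑ i ∈ s₂, ∑ j ∈ s₂, α i * α j * K (x i) (x j) = ⟪η, η⟫ := by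
    rw [hη, sum_inner]
    refine Finset.sum_congr rfl fun i hi => ?_
    rw [inner_sum]
    refine Finset.sum_congr rfl fun j hj => ?_
    rw [real_inner_smul_left, real_inner_smul_right, hv₂ _ (Hmem2 i hi),
      hv₂ _ (Hmem2 j hj), hk₂, ← hKΩ _ _ (Or.inr ⟨Hmem2 i hi, Hmem2 j hj⟩)]
    ring
  have HB12 : ∑ i ∈ s₁, ∑ j ∈ s₂, α i * α j * K (x i) (x j) = ⟪Φ ξ, η⟫ := by
    rw [hξ, hη, map_sum, sum_inner]
    refine Finset.sum_congr rfl fun i hi => ?_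
    rw [inner_sum]
    refine Finset.sum_congr rfl fun j hj => ?_
    rw [map_smul, real_inner_smul_left, real_inner_smul_right,
      ← Tc i j (Hmem1 i hi) (Hmem2 j hj) (Hmemn1 j hj)]
    ring
  have HB21 : ∑ i ∈ s₂, ∑ j ∈ s₁, α i * α j * K (x i) (x j) = ⟪Φ ξ, η⟫ := by
    rw [Finset.sum_comm, hξ, hη, map_sum, sum_inner]
    refine Finset.sum_congr rfl fun j hj => ?_
    rw [inner_sum]
    refine Finset.sum_congr rfl fun i hi => ?_
    rw [map_smul, real_inner_smul_left, real_inner_smul_right,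
      ← Tc' i j (Hmem2 i hi) (Hmemn1 i hi) (Hmem1 j hj)]
    ring
  have split : ∑ i, ∑ j, α i * α j * K (x i) (x j)
      = (∑ i ∈ s₁, ∑ j ∈ s₁, α i * α j * K (x i) (x j)
          + ∑ i ∈ s₁, ∑ j ∈ s₂, α i * α j * K (x i) (x j))
        + (∑ i ∈ s₂, ∑ j ∈ s₁, α i * α j * K (x i) (x j)
          + ∑ i ∈ s₂, ∑ j ∈ s₂, α i * α j * K (x i) (x j)) := by
    rw [← Finset.sum_filter_add_sum_filter_not Finset.univ (fun i : Fin n => x i ∈ X₁)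
      (fun i => ∑ j, α i * α j * K (x i) (x j))]
    congr 1
    · rw [← Finset.sum_add_distrib]
      exact Finset.sum_congr rfl fun i _ =>
        (Finset.sum_filter_add_sum_filter_not Finset.univ _ _).symm
    · rw [← Finset.sum_add_distrib]
      exact Finset.sum_congr rfl fun i _ =>
        (Finset.sum_filter_add_sum_filter_not Finset.univ _ _).symm
  rw [split, HB11, HB12, HB21, HB22]
  have hΦξ : ‖Φ ξ‖ ≤ ‖ξ‖ := by
    calc ‖Φ ξ‖ ≤ ‖Φ‖ * ‖ξ‖ := Φ.le_opNorm ξ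
    _ ≤ 1 * ‖ξ‖ := mul_le_mul_of_nonneg_right hΦn (norm_nonneg ξ)
    _ = ‖ξ‖ := one_mul _
  have h1 : |⟪Φ ξ, η⟫| ≤ ‖ξ‖ * ‖η‖ :=
    le_trans (abs_real_inner_le_norm _ _)
      (mul_le_mul_of_nonneg_right hΦξ (norm_nonneg η))
  have h2 := abs_le.mp h1
  rw [real_inner_self_eq_norm_mul_norm, real_inner_self_eq_norm_mul_norm]
  nlinarith [sq_nonneg (‖ξ‖ - ‖η‖), h2.1, h2.2]

lemma exists_contraction {X H₁ H₂ : Type*}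
    [NormedAddCommGroup H₁] [InnerProductSpace ℝ H₁] [CompleteSpace H₁]
    [NormedAddCommGroup H₂] [InnerProductSpace ℝ H₂] [CompleteSpace H₂]
    (X₁ X₂ : Set X) (KΩ : X → X → ℝ)
    (k₁ : X₁ → H₁) (hk₁ : ∀ u v : X₁, ⟪k₁ u, k₁ v⟫ = KΩ u v)
    (hd₁ : Dense (Submodule.span ℝ (Set.range k₁) : Set H₁))
    (k₂ : X₂ → H₂) (hk₂ : ∀ u v : X₂, ⟪k₂ u, k₂ v⟫ = KΩ u v)
    (hd₂ : Dense (Submodule.span ℝ (Set.range k₂) : Set H₂))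
    (K : X → X → ℝ) (hKker : IsKernel K)
    (hKeq : ∀ x y : X, (x, y) ∈ X₁ ×ˢ X₁ ∪ X₂ ×ˢ X₂ → K x y = KΩ x y) :
    ∃ Φ : H₁ →L[ℝ] H₂, ‖Φ‖ ≤ 1 ∧ ∀ (u : X₁) (v : X₂), K u v = ⟪Φ (k₁ u), k₂ v⟫ := by
  classical
  have hK1 : ∀ u v : X₁, K u v = ⟪k₁ u, k₁ v⟫ := fun u v => by
    rw [hKeq _ _ (Or.inl ⟨u.2, v.2⟩), ← hk₁]
  have hK2 : ∀ u v : X₂, K u v = ⟪k₂ u, k₂ v⟫ := fun u v => by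
    rw [hKeq _ _ (Or.inr ⟨u.2, v.2⟩), ← hk₂]
  have hg1 : ∀ c : X₁ →₀ ℝ, ‖Finsupp.linearCombination ℝ k₁ c‖ ^ 2
      = ∑ u ∈ c.support, ∑ v ∈ c.support, c u * c v * K u v := by
    intro c
    rw [← real_inner_self_eq_norm_sq, lin_inner]
    exact Finset.sum_congr rfl fun u _ => Finset.sum_congr rfl fun v _ => by rw [← hK1]
  have hg2 : ∀ c : X₂ →₀ ℝ, ‖Finsupp.linearCombination ℝ k₂ c‖ ^ 2
      = ∑ u ∈ c.support, ∑ v ∈ c.support, c u * c v * K u v := by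
    intro c
    rw [← real_inner_self_eq_norm_sq, lin_inner]
    exact Finset.sum_congr rfl fun u _ => Finset.sum_congr rfl fun v _ => by rw [← hK2]
  have hdr2 : Dense ((LinearMap.range (Finsupp.linearCombination ℝ k₂) : Submodule ℝ H₂) : Set H₂) := by
    rw [Finsupp.range_linearCombination]; exact hd₂
  have hdr1 : Dense ((LinearMap.range (Finsupp.linearCombination ℝ k₁) : Submodule ℝ H₁) : Set H₁) := by
    rw [Finsupp.range_linearCombination]; exact hd₁
  -- Step A : pointwise functionals
  have stepA : ∀ u : X₁, ∃ ℓ : H₂ →L[ℝ] ℝ, ‖ℓ‖ ≤ ‖k₁ u‖ ∧ ∀ v : X₂, ℓ (k₂ v) = K u v := by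
    intro u
    have hbound : ∀ c : X₂ →₀ ℝ,
        ‖Finsupp.linearCombination ℝ (fun v : X₂ => K u v) c‖ ≤
          ‖k₁ u‖ * ‖Finsupp.linearCombination ℝ k₂ c‖ := by
      intro c
      have hval : Finsupp.linearCombination ℝ (fun v : X₂ => K u v) c
          = ∑ v ∈ c.support, c v * K u v := by
        rw [Finsupp.linearCombination_apply, Finsupp.sum]
        exact Finset.sum_congr rfl fun v _ => rfl
      have hcs := hKker.cs (Finset.univ : Finset Unit) c.support
        (fun _ => (1 : ℝ)) (fun v => c v) (fun _ => (u : X)) (fun v : X₂ => (v : X))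
      have hl : ∑ i ∈ (Finset.univ : Finset Unit), ∑ j ∈ c.support,
          (1 : ℝ) * c j * K u j = ∑ v ∈ c.support, c v * K u v := by
        rw [Finset.sum_const, Finset.card_univ]
        simp [one_mul]
      have hr : ∑ i ∈ (Finset.univ : Finset Unit), ∑ j ∈ (Finset.univ : Finset Unit),
          (1 : ℝ) * 1 * K u u = K u u := by simp
      rw [hl, hr] at hcs
      have hKuu : K u u = ‖k₁ u‖ ^ 2 := by rw [hK1, real_inner_self_eq_norm_sq]
      rw [hKuu, ← hg2 c] at hcs
      have habs : |∑ v ∈ c.support, c v * K u v| ≤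
          ‖k₁ u‖ * ‖Finsupp.linearCombination ℝ k₂ c‖ := by
        apply abs_le_of_sq_le' (mul_nonneg (norm_nonneg _) (norm_nonneg _))
        calc (∑ v ∈ c.support, c v * K u v) ^ 2
            ≤ ‖k₁ u‖ ^ 2 * ‖Finsupp.linearCombination ℝ k₂ c‖ ^ 2 := hcs
          _ = (‖k₁ u‖ * ‖Finsupp.linearCombination ℝ k₂ c‖) ^ 2 := by ring
      rw [hval, Real.norm_eq_abs]
      exact habs
    obtain ⟨ℓ, hn, he⟩ := extend_factor (Finsupp.linearCombination ℝ k₂)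
      (Finsupp.linearCombination ℝ (fun v : X₂ => K u v)) ‖k₁ u‖ (norm_nonneg _)
      hbound hdr2
    refine ⟨ℓ, hn, fun v => ?_⟩
    have := he (Finsupp.single v 1)
    rw [Finsupp.linearCombination_single, Finsupp.linearCombination_single,
      one_smul, one_smul] at this
    exact this
  choose ℓ hℓn hℓe using stepA
  -- Step B : the map ψ and its linear combination bound
  set ψ : X₁ → H₂ := fun u => (InnerProductSpace.toDual ℝ H₂).symm (ℓ u) with hψdef
  have hψ : ∀ (u : X₁) (v : X₂), ⟪ψ u, k₂ v⟫ = K u v := by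
    intro u v
    rw [hψdef]
    simp only [InnerProductSpace.toDual_symm_apply]
    exact hℓe u v
  have hbound1 : ∀ c : X₁ →₀ ℝ,
      ‖Finsupp.linearCombination ℝ ψ c‖ ≤ 1 * ‖Finsupp.linearCombination ℝ k₁ c‖ := by
    intro c
    rw [one_mul]
    set w := Finsupp.linearCombination ℝ ψ c with hw
    set a := ‖Finsupp.linearCombination ℝ k₁ c‖ with ha
    have hset : ∀ η : H₂, ⟪w, η⟫ ≤ a * ‖η‖ := by
      have hcl : IsClosed {η : H₂ | ⟪w, η⟫ ≤ a * ‖η‖} :=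
        isClosed_le (continuous_const.inner continuous_id)
          (continuous_const.mul continuous_norm)
      have hsub : ((LinearMap.range (Finsupp.linearCombination ℝ k₂) :
          Submodule ℝ H₂) : Set H₂) ⊆ {η : H₂ | ⟪w, η⟫ ≤ a * ‖η‖} := by
        rintro η ⟨d, rfl⟩
        have hwval : ⟪w, Finsupp.linearCombination ℝ k₂ d⟫
            = ∑ u ∈ c.support, ∑ v ∈ d.support, c u * d v * K u v := by
          rw [hw, lin_inner]
          exact Finset.sum_congr rfl fun u _ => Finset.sum_congr rfl fun v _ => by
            rw [hψ]
        have hcs := hKker.cs c.support d.support (fun u => c u) (fun v => d v)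
          (fun u : X₁ => (u : X)) (fun v : X₂ => (v : X))
        rw [← hg1 c, ← hg2 d] at hcs
        have habs : |⟪w, Finsupp.linearCombination ℝ k₂ d⟫| ≤
            a * ‖Finsupp.linearCombination ℝ k₂ d‖ := by
          rw [hwval]
          apply abs_le_of_sq_le' (mul_nonneg (norm_nonneg _) (norm_nonneg _))
          calc (∑ u ∈ c.support, ∑ v ∈ d.support, c u * d v * K u v) ^ 2
              ≤ a ^ 2 * ‖Finsupp.linearCombination ℝ k₂ d‖ ^ 2 := hcs
            _ = (a * ‖Finsupp.linearCombination ℝ k₂ d‖) ^ 2 := by ring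
        exact le_trans (le_abs_self _) habs
      have hd' : Dense {η : H₂ | ⟪w, η⟫ ≤ a * ‖η‖} := hdr2.mono hsub
      intro η
      have : {η : H₂ | ⟪w, η⟫ ≤ a * ‖η‖} = Set.univ := by
        rw [← hcl.closure_eq]; exact hd'.closure_eq
      exact (Set.eq_univ_iff_forall.mp this) η
    have hww := hset w
    rw [real_inner_self_eq_norm_mul_norm] at hww
    rcases eq_or_lt_of_le (norm_nonneg w) with h0 | hpos
    · rw [← h0]; exact norm_nonneg _
    · exact le_of_mul_le_mul_right hww hpos
  obtain ⟨Φ, hΦn, hΦe⟩ := extend_factor (Finsupp.linearCombination ℝ k₁)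
    (Finsupp.linearCombination ℝ ψ) 1 zero_le_one hbound1 hdr1
  refine ⟨Φ, hΦn, fun u v => ?_⟩
  have := hΦe (Finsupp.single u 1)
  rw [Finsupp.linearCombination_single, Finsupp.linearCombination_single,
    one_smul, one_smul] at this
  rw [this, hψ]

/-- Contraction characterization of completions on the 2-serrated domain
`(X₁ × X₁) ∪ (X₂ × X₂)`: completions correspond bijectively to contractions
`Φ : H₁ → H₂` with `Φ (k₁ x) = k₂ x` on `X₁ ∩ X₂`. -/
theorem completion_contraction_correspondence {X H₁ H₂ : Type*}
    [NormedAddCommGroup H₁] [InnerProductSpace ℝ H₁] [CompleteSpace H₁]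
    [NormedAddCommGroup H₂] [InnerProductSpace ℝ H₂] [CompleteSpace H₂]
    (X₁ X₂ : Set X) (hcover : X₁ ∪ X₂ = Set.univ)
    (KΩ : X → X → ℝ)
    (hpart : IsPartialKernel (X₁ ×ˢ X₁ ∪ X₂ ×ˢ X₂) KΩ)
    (k₁ : X₁ → H₁) (hk₁ : ∀ u v : X₁, ⟪k₁ u, k₁ v⟫ = KΩ u v)
    (hd₁ : Dense (Submodule.span ℝ (Set.range k₁) : Set H₁))
    (k₂ : X₂ → H₂) (hk₂ : ∀ u v : X₂, ⟪k₂ u, k₂ v⟫ = KΩ u v)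
    (hd₂ : Dense (Submodule.span ℝ (Set.range k₂) : Set H₂)) :
    -- (i) every completion is represented by a unique contraction, which agrees with the
    -- canonical identification on `X₁ ∩ X₂`
    (∀ K : X → X → ℝ, IsCompletion (X₁ ×ˢ X₁ ∪ X₂ ×ˢ X₂) KΩ K →
      (∃! Φ : H₁ →L[ℝ] H₂, ‖Φ‖ ≤ 1 ∧
        ∀ (u : X₁) (v : X₂), K u v = ⟪Φ (k₁ u), k₂ v⟫) ∧
      (∀ Φ : H₁ →L[ℝ] H₂, ‖Φ‖ ≤ 1 →
        (∀ (u : X₁) (v : X₂), K u v = ⟪Φ (k₁ u), k₂ v⟫) →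
        ∀ (u : X) (h1 : u ∈ X₁) (h2 : u ∈ X₂), Φ (k₁ ⟨u, h1⟩) = k₂ ⟨u, h2⟩)) ∧
    -- (ii) conversely, every such contraction gives rise to a completion
    (∀ Φ : H₁ →L[ℝ] H₂, ‖Φ‖ ≤ 1 →
      (∀ (u : X) (h1 : u ∈ X₁) (h2 : u ∈ X₂), Φ (k₁ ⟨u, h1⟩) = k₂ ⟨u, h2⟩) →
      ∀ K : X → X → ℝ,
        (∀ u v : X, (u, v) ∈ X₁ ×ˢ X₁ ∪ X₂ ×ˢ X₂ → K u v = KΩ u v) →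
        (∀ (u v : X) (h1 : u ∈ X₁) (h2 : v ∈ X₂), u ∉ X₂ → v ∉ X₁ →
          K u v = ⟪Φ (k₁ ⟨u, h1⟩), k₂ ⟨v, h2⟩⟫) →
        (∀ (u v : X) (h2 : u ∈ X₂) (h1 : v ∈ X₁), u ∉ X₁ → v ∉ X₂ →
          K u v = ⟪Φ (k₁ ⟨v, h1⟩), k₂ ⟨u, h2⟩⟫) →
        IsCompletion (X₁ ×ˢ X₁ ∪ X₂ ×ˢ X₂) KΩ K) := by
  classical
  have hsym2 : ∀ u v : X₂, KΩ u v = KΩ v u :=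
    fun u v => (hpart X₂ Set.subset_union_right).1 u v
  constructor
  · rintro K ⟨hKker, hKeq⟩
    obtain ⟨Φ, hΦn, hΦp⟩ := exists_contraction X₁ X₂ KΩ k₁ hk₁ hd₁ k₂ hk₂ hd₂ K hKker hKeq
    have hK2 : ∀ u v : X₂, K ↑u ↑v = ⟪k₂ u, k₂ v⟫ := fun u v => by
      rw [hKeq _ _ (Or.inr ⟨u.2, v.2⟩), ← hk₂]
    have hint : ∀ Φ' : H₁ →L[ℝ] H₂, ‖Φ'‖ ≤ 1 →
        (∀ (u : X₁) (v : X₂), K ↑u ↑v = ⟪Φ' (k₁ u), k₂ v⟫) →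
        ∀ (u : X) (h1 : u ∈ X₁) (h2 : u ∈ X₂), Φ' (k₁ ⟨u, h1⟩) = k₂ ⟨u, h2⟩ := by
      intro Φ' _ hp' u h1 h2
      apply eq_of_inner_eq_on_dense hd₂
      rintro z ⟨v, rfl⟩
      rw [← hp' ⟨u, h1⟩ v, hK2 ⟨u, h2⟩ v]
    refine ⟨⟨Φ, ⟨hΦn, hΦp⟩, ?_⟩, hint⟩
    rintro Φ' ⟨hn', hp'⟩
    refine ContinuousLinearMap.ext_on hd₁ ?_
    rintro z ⟨u, rfl⟩
    apply eq_of_inner_eq_on_dense hd₂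
    rintro z ⟨v, rfl⟩
    rw [← hp' u v, ← hΦp u v]
  · intro Φ hΦn hΦint K hKΩ hK12 hK21
    refine ⟨⟨?_, pos_part X₁ X₂ hcover KΩ hsym2 k₁ hk₁ k₂ hk₂ Φ hΦn hΦint K hKΩ hK12 hK21⟩, hKΩ⟩
    have hsym1 : ∀ u v : X₁, KΩ u v = KΩ v u :=
      fun u v => (hpart X₁ Set.subset_union_left).1 u v
    have hcov : ∀ u : X, u ∈ X₁ ∪ X₂ := fun u => hcover.symm ▸ Set.mem_univ u
    intro u v
    by_cases hu1 : u ∈ X₁ <;> by_cases hv1 : v ∈ X₁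
    · rw [hKΩ u v (Or.inl ⟨hu1, hv1⟩), hKΩ v u (Or.inl ⟨hv1, hu1⟩)]
      exact hsym1 ⟨u, hu1⟩ ⟨v, hv1⟩
    · have hv2 : v ∈ X₂ := (hcov v).resolve_left hv1
      by_cases hu2 : u ∈ X₂
      · rw [hKΩ u v (Or.inr ⟨hu2, hv2⟩), hKΩ v u (Or.inr ⟨hv2, hu2⟩)]
        exact hsym2 ⟨u, hu2⟩ ⟨v, hv2⟩
      · rw [hK12 u v hu1 hv2 hu2 hv1, hK21 v u hv2 hu1 hv1 hu2]
    · have hu2 : u ∈ X₂ := (hcov u).resolve_left hu1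
      by_cases hv2 : v ∈ X₂
      · rw [hKΩ u v (Or.inr ⟨hu2, hv2⟩), hKΩ v u (Or.inr ⟨hv2, hu2⟩)]
        exact hsym2 ⟨u, hu2⟩ ⟨v, hv2⟩
      · rw [hK21 u v hu2 hv1 hu1 hv2, hK12 v u hv1 hu2 hv2 hu1]
    · have hu2 : u ∈ X₂ := (hcov u).resolve_left hu1
      have hv2 : v ∈ X₂ := (hcov v).resolve_left hv1
      rw [hKΩ u v (Or.inr ⟨hu2, hv2⟩), hKΩ v u (Or.inr ⟨hv2, hu2⟩)]
      exact hsym2 ⟨u, hu2⟩ ⟨v, hv2⟩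
end
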